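/- arXiv:0909.4715 — 7 statements merged into one kernel-verified Lean document; each statement's English description precedes it below -/
import Mathlib

section
/- If a category V has disjoint coproducts and a strict initial object, and every object of V is a coproduct of connected objects, then V is extensive. -/
open CategoryTheory CategoryTheory.Limits Opposite

universe w v u

namespace Paper

variable {V : Type u} [Category.{v} V]

/-- An object is connected when its covariant hom functor preserves coproducts. -/
def IsConnectedObj (X : V) : Prop :=
  ∀ J : Type w, Nonempty (PreservesColimitsOfShape (Discrete J) (coyoneda.obj (op X)))

/-- The canonical functor `∏_i (V/X_i) ⥤ V/(∐_i X_i)` sending a family `(f_i : Y_i ⟶ X_i)`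
to `∐_i f_i`. -/
noncomputable def overCoproduct [HasCoproducts.{w} V] {I : Type w} (X : I → V) :
    (∀ i, Over (X i)) ⥤ Over (∐ X) where
  obj f := Over.mk (Sigma.desc fun i => (f i).hom ≫ Sigma.ι X i)
  map {f g} α := Over.homMk (Limits.Sigma.map fun i => (α i).left) (by
    dsimp
    ext i
    simp only [Limits.ι_colimMap_assoc, Discrete.functor_obj_eq_as, Discrete.natTrans_app,
      Limits.colimit.ι_desc, Cofan.mk_pt, Cofan.mk_ι_app, Limits.colimit.ι_desc_assoc]
    rw [← Over.w (α i)]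
    simp [Category.assoc])
  map_id f := by
    apply Over.OverMorphism.ext
    dsimp
    ext i
    simp
  map_comp {f g h} α β := by
    apply Over.OverMorphism.ext
    dsimp
    ext i
    simp

/-- A category is extensive when it has coproducts and all the canonical functors
`∏_i (V/X_i) ⥤ V/(∐_i X_i)` are equivalences of categories. -/
def IsExtensive (V : Type u) [Category.{v} V] : Prop :=
  ∃ _ : HasCoproducts.{w} V, ∀ {I : Type w} (X : I → V),
    letI : HasCoproducts.{w} V := ‹_›
    Nonempty (overCoproduct X).IsEquivalence

section Helpers
variable [HasCoproducts.{w} V]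

lemma conn_not_initial [HasInitial V] {C : V} (hC : IsConnectedObj.{w} C) (t : C ⟶ ⊥_ V) :
    False := by
  obtain ⟨inst⟩ := hC PEmpty.{w+1}
  have hc := isColimitOfPreserves (coyoneda.obj (op C))
    (colimit.isColimit (Discrete.functor (fun k : PEmpty.{w+1} => (PEmpty.elim k : V))))
  let s : Cocone (Discrete.functor (fun k : PEmpty.{w+1} => (PEmpty.elim k : V)) ⋙
      coyoneda.obj (op C)) :=
    { pt := PEmpty.{v+1}
      ι := { app := fun j => j.as.elim, naturality := fun j => j.as.elim } }
  exact (hc.desc s (t ≫ initial.to _)).elim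

lemma conn_factor {C : V} (hC : IsConnectedObj.{w} C) {I : Type w} (X : I → V)
    (h : C ⟶ ∐ X) : ∃ (i : I) (g : C ⟶ X i), g ≫ Sigma.ι X i = h := by
  obtain ⟨inst⟩ := hC I
  have hc := isColimitOfPreserves (coyoneda.obj (op C))
    (colimit.isColimit (Discrete.functor X))
  obtain ⟨j, y, hy⟩ := Types.jointly_surjective _ hc h
  exact ⟨j.as, y, by simpa using hy⟩

lemma conn_index_unique [HasInitial V]
    (hdisj : ∀ {I : Type w} (X : I → V) (i j : I), i ≠ j →
      IsPullback (initial.to (X i)) (initial.to (X j)) (Sigma.ι X i) (Sigma.ι X j))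
    {C : V} (hC : IsConnectedObj.{w} C) {I : Type w} (X : I → V) {i j : I}
    (g : C ⟶ X i) (g' : C ⟶ X j) (hgg' : g ≫ Sigma.ι X i = g' ≫ Sigma.ι X j) : i = j := by
  by_contra hij
  exact conn_not_initial hC ((hdisj X i j hij).lift g g' hgg')

/-- Component factorization for maps over the coproduct. -/
lemma comp_exists [HasInitial V]
    (hmono : ∀ {I : Type w} (X : I → V) (i : I), Mono (Sigma.ι X i))
    (hdisj : ∀ {I : Type w} (X : I → V) (i j : I), i ≠ j →
      IsPullback (initial.to (X i)) (initial.to (X j)) (Sigma.ι X i) (Sigma.ι X j))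
    (hconn : ∀ X : V, ∃ (I : Type w) (Y : I → V) (f : ∀ i, Y i ⟶ X),
      (∀ i, IsConnectedObj.{w} (Y i)) ∧ Nonempty (IsColimit (Cofan.mk X f)))
    {I : Type w} (X : I → V) (Y Y' : I → V) (p : ∀ i, Y i ⟶ X i) (p' : ∀ i, Y' i ⟶ X i)
    (G : ∐ Y ⟶ ∐ Y')
    (hG : G ≫ Sigma.desc (fun i => p' i ≫ Sigma.ι X i) = Sigma.desc (fun i => p i ≫ Sigma.ι X i))
    (i : I) :
    ∃ t : Y i ⟶ Y' i, t ≫ p' i = p i ∧ Sigma.ι Y i ≫ G = t ≫ Sigma.ι Y' i := by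
  obtain ⟨K, C, e, hCc, ⟨hc⟩⟩ := hconn (Y i)
  have hfact : ∀ k : K, ∃ v : C k ⟶ Y' i, v ≫ Sigma.ι Y' i = e k ≫ Sigma.ι Y i ≫ G := by
    intro k
    obtain ⟨j, v, hv⟩ := conn_factor (hCc k) Y' (e k ≫ Sigma.ι Y i ≫ G)
    have hji : j = i := by
      refine conn_index_unique hdisj (hCc k) X (v ≫ p' j) (e k ≫ p i) ?_
      have h1 : (v ≫ Sigma.ι Y' j) ≫ Sigma.desc (fun i => p' i ≫ Sigma.ι X i)
          = (e k ≫ Sigma.ι Y i ≫ G) ≫ Sigma.desc (fun i => p' i ≫ Sigma.ι X i) := by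
        rw [hv]
      simpa [hG] using h1
    subst hji
    exact ⟨v, hv⟩
  choose v hv using hfact
  refine ⟨hc.desc (Cofan.mk (Y' i) v), ?_, ?_⟩
  · refine hc.hom_ext fun ⟨k⟩ => ?_
    have fac := hc.fac (Cofan.mk (Y' i) v) ⟨k⟩
    simp only [Cofan.mk_pt, Cofan.mk_ι_app] at fac
    have := hmono X i
    rw [← cancel_mono (Sigma.ι X i)]
    simp only [Cofan.mk_pt, Cofan.mk_ι_app, Category.assoc]
    rw [reassoc_of% fac]
    have h1 : (v k ≫ Sigma.ι Y' i) ≫ Sigma.desc (fun i => p' i ≫ Sigma.ι X i)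
        = (e k ≫ Sigma.ι Y i ≫ G) ≫ Sigma.desc (fun i => p' i ≫ Sigma.ι X i) := by
      rw [hv]
    simpa [hG] using h1
  · refine hc.hom_ext fun ⟨k⟩ => ?_
    have fac := hc.fac (Cofan.mk (Y' i) v) ⟨k⟩
    simp only [Cofan.mk_pt, Cofan.mk_ι_app] at fac
    simp only [Cofan.mk_pt, Cofan.mk_ι_app]
    rw [reassoc_of% fac, hv k]

end Helpers

/-- If a category `V` has disjoint coproducts and a strict initial object, and
every object of `V` is a coproduct of connected objects, then `V` is extensive. -/
theorem stmt0 (V : Type u) [Category.{v} V] [HasCoproducts.{w} V] [HasInitial V]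
    [HasStrictInitialObjects V]
    (hmono : ∀ {I : Type w} (X : I → V) (i : I), Mono (Sigma.ι X i))
    (hdisj : ∀ {I : Type w} (X : I → V) (i j : I), i ≠ j →
      IsPullback (initial.to (X i)) (initial.to (X j)) (Sigma.ι X i) (Sigma.ι X j))
    (hconn : ∀ X : V, ∃ (I : Type w) (Y : I → V) (f : ∀ i, Y i ⟶ X),
      (∀ i, IsConnectedObj.{w} (Y i)) ∧ Nonempty (IsColimit (Cofan.mk X f))) :
    IsExtensive.{w} V := by
  refine ⟨inferInstance, fun {I} X => ⟨?_⟩⟩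
  have faithful : (overCoproduct X).Faithful := by
    refine ⟨fun {f g} α β hαβ => ?_⟩
    funext i
    apply Over.OverMorphism.ext
    have h1 : (Limits.Sigma.map fun i => (α i).left) = Limits.Sigma.map fun i => (β i).left :=
      congrArg CommaMorphism.left hαβ
    have h2 := congrArg (fun t => Sigma.ι (fun i => (f i).left) i ≫ t) h1
    simp only [ι_colimMap, Sigma.ι_map, Discrete.functor_obj_eq_as, Discrete.natTrans_app] at h2
    have := hmono (fun i => (g i).left) i
    exact (cancel_mono (Sigma.ι (fun i => (g i).left) i)).mp h2
  have full : (overCoproduct X).Full := by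
    refine ⟨fun {f f'} g => ?_⟩
    have hG : g.left ≫ Sigma.desc (fun i => (f' i).hom ≫ Sigma.ι X i)
        = Sigma.desc (fun i => (f i).hom ≫ Sigma.ι X i) := Over.w g
    have hx := fun i => comp_exists hmono hdisj hconn X (fun i => (f i).left)
      (fun i => (f' i).left) (fun i => (f i).hom) (fun i => (f' i).hom) g.left hG i
    choose t ht1 ht2 using hx
    refine ⟨fun i => Over.homMk (t i) (ht1 i), ?_⟩
    apply Over.OverMorphism.ext
    dsimp [overCoproduct]
    ext i
    simp only [ι_colimMap, Over.homMk_left, Sigma.ι_map, Discrete.functor_obj_eq_as, Discrete.natTrans_app]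
    exact (ht2 i).symm
  have essSurj : (overCoproduct X).EssSurj := by
    refine ⟨fun W => ?_⟩
    obtain ⟨K, C, e, hCc, ⟨hc⟩⟩ := hconn W.left
    have hfact : ∀ k : K, ∃ (i : I) (g : C k ⟶ X i), g ≫ Sigma.ι X i = e k ≫ W.hom :=
      fun k => conn_factor (hCc k) X (e k ≫ W.hom)
    choose idx g hg using hfact
    let Y : I → V := fun i => ∐ (fun k : {k : K // idx k = i} => C k.1)
    let p : ∀ i, Y i ⟶ X i := fun i =>
      Sigma.desc (fun k => g k.1 ≫ eqToHom (congrArg X k.2))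
    refine ⟨fun i => Over.mk (p i), ⟨?_⟩⟩
    have hφψ₁ : ∀ k : K,
        (Sigma.ι (fun k' : {k' : K // idx k' = idx k} => C k'.1) ⟨k, rfl⟩ ≫ Sigma.ι Y (idx k)) ≫
          Sigma.desc (fun i => Sigma.desc (fun k' : {k' : K // idx k' = i} => e k'.1)) = e k := by
      intro k
      simp
    refine Over.isoMk ⟨Sigma.desc (fun i => Sigma.desc (fun k : {k : K // idx k = i} => e k.1)),
      hc.desc (Cofan.mk (∐ Y) (fun k =>
        Sigma.ι (fun k' : {k' : K // idx k' = idx k} => C k'.1) ⟨k, rfl⟩ ≫ Sigma.ι Y (idx k))),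
      ?_, ?_⟩ ?_
    · dsimp only [overCoproduct, Over.mk_left]
      ext i ⟨k, hk⟩
      subst hk
      have fac := hc.fac (Cofan.mk (∐ Y) (fun k =>
        Sigma.ι (fun k' : {k' : K // idx k' = idx k} => C k'.1) ⟨k, rfl⟩ ≫ Sigma.ι Y (idx k))) ⟨k⟩
      simp only [Cofan.mk_pt, Cofan.mk_ι_app] at fac
      simp only [Category.comp_id, Category.assoc, colimit.ι_desc, Cofan.mk_pt, Cofan.mk_ι_app,
        colimit.ι_desc_assoc]
      simpa using fac
    · refine hc.hom_ext fun ⟨k⟩ => ?_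
      have fac := hc.fac (Cofan.mk (∐ Y) (fun k =>
        Sigma.ι (fun k' : {k' : K // idx k' = idx k} => C k'.1) ⟨k, rfl⟩ ≫ Sigma.ι Y (idx k))) ⟨k⟩
      simp only [Cofan.mk_pt, Cofan.mk_ι_app] at fac
      simp only [Cofan.mk_pt, Cofan.mk_ι_app, Category.comp_id]
      refine ((reassoc_of% fac) _).trans ?_
      simp
    · dsimp [overCoproduct]
      ext i ⟨k, hk⟩
      subst hk
      simp only [colimit.ι_desc_assoc, Cofan.mk_pt, Cofan.mk_ι_app, colimit.ι_desc, Y, p]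
      simp only [eqToHom_refl, Category.comp_id]
      exact (hg k).symm
  exact { faithful := faithful, full := full, essSurj := essSurj }

end Paper
end

section
/- For a lextensive category V, every object of V can be expressed as a coproduct of connected objects if and only if the functor (−)·1 : Set → V sending a set Z to the Z-fold copower of the terminal object has a left adjoint. -/
open CategoryTheory CategoryTheory.Limits Opposite

universe w v u

namespace Paper

variable {V : Type u} [Category.{v} V]

/-- The functor `(−)·1 : Set → V` sending a set `Z` to the `Z`-fold copower of the
terminal object. -/
noncomputable def copowerOne (V : Type u) [Category.{v} V] [HasTerminal V]
    [HasCoproducts.{w} V] : Type w ⥤ V where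
  obj Z := ∐ fun _ : Z => ⊤_ V
  map {Z Z'} f := Sigma.desc fun z => Sigma.ι (fun _ : Z' => ⊤_ V) (f z)
  map_id Z := by
    ext z
    simp
  map_comp {Z Z' Z''} f g := by
    ext z
    simp

universe w' v' u'

section TypesCofan

variable {J : Type w} {F : J → Type v'}

/-- In `Type`, a colimit cofan over a discrete family gives unique factorization of
elements through the injections. -/
theorem cofanTypes_existsUnique {c : Cofan F} (hc : IsColimit c) (x : c.pt) :
    ∃! p : Σ j, F j, c.inj p.1 p.2 = x := by
  have hinj : ∀ (j : J) (y : F j) (j' : J) (y' : F j'), c.inj j y = c.inj j' y' →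
      (⟨j, y⟩ : Σ j, F j) = ⟨j', y'⟩ := by
    intro j y j' y' hyy
    let t : Cofan F := Cofan.mk (ULift.{v'} Prop)
      (fun a => TypeCat.ofHom fun b => ULift.up ((⟨a, b⟩ : Σ j, F j) = ⟨j', y'⟩))
    have h1 : hc.desc t (c.inj j y) = ULift.up ((⟨j, y⟩ : Σ j, F j) = ⟨j', y'⟩) :=
      ConcreteCategory.congr_hom (hc.fac t ⟨j⟩) y
    have h2 : hc.desc t (c.inj j' y') = ULift.up ((⟨j', y'⟩ : Σ j, F j) = ⟨j', y'⟩) :=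
      ConcreteCategory.congr_hom (hc.fac t ⟨j'⟩) y'
    rw [hyy] at h1
    exact of_eq_true ((congrArg ULift.down (h1.symm.trans h2)).trans (eq_true rfl))
  have hsurj : ∀ x : c.pt, ∃ p : Σ j, F j, c.inj p.1 p.2 = x := by
    let s : Cofan F := Cofan.mk (ULift.{v'} Prop) (fun a => TypeCat.ofHom fun b => ULift.up True)
    have hA : TypeCat.ofHom (fun x : c.pt => ULift.up.{v'} (∃ p : Σ j, F j, c.inj p.1 p.2 = x)) = hc.desc s :=
      hc.uniq s _ (by intro ⟨j⟩; apply ConcreteCategory.hom_ext; intro y; exact congrArg ULift.up (eq_true ⟨⟨j, y⟩, rfl⟩))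
    have hB : TypeCat.ofHom (fun _ : c.pt => ULift.up.{v'} True) = hc.desc s :=
      hc.uniq s _ (by intro ⟨j⟩; apply ConcreteCategory.hom_ext; intro y; rfl)
    intro x
    exact of_eq_true (congrArg ULift.down (ConcreteCategory.congr_hom (hA.trans hB.symm) x))
  obtain ⟨p, hp⟩ := hsurj x
  refine ⟨p, hp, ?_⟩
  rintro ⟨a, b⟩ hq
  obtain ⟨p1, p2⟩ := p
  exact hinj a b p1 p2 (hq.trans hp.symm)

/-- Conversely, unique factorization of elements makes a cofan in `Type` a colimit. -/
noncomputable def cofanTypes_isColimit (c : Cofan F)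
    (h : ∀ x : c.pt, ∃! p : Σ j, F j, c.inj p.1 p.2 = x) : IsColimit c :=
  mkCofanColimit c
    (fun s => TypeCat.ofHom fun x => s.inj (h x).choose.1 (h x).choose.2)
    (fun s j => by
      apply ConcreteCategory.hom_ext; intro y
      have h2 : (h (c.inj j y)).choose = ⟨j, y⟩ :=
        ((h (c.inj j y)).choose_spec.2 ⟨j, y⟩ rfl).symm
      show s.inj (h (c.inj j y)).choose.1 (h (c.inj j y)).choose.2 = s.inj j y
      rw [h2])
    (fun s m hm => by
      apply ConcreteCategory.hom_ext; intro x
      have h1 : c.inj (h x).choose.1 (h x).choose.2 = x := (h x).choose_spec.1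
      show m x = s.inj (h x).choose.1 (h x).choose.2
      conv_lhs => rw [← h1]
      exact ConcreteCategory.congr_hom (hm (h x).choose.1) (h x).choose.2)

end TypesCofan

section MapCofan

variable {V : Type u} [Category.{v} V] {D : Type u'} [Category.{v'} D]

/-- Transfer between `L.mapCocone c` for a cofan `c` and the corresponding cofan on the
images. -/
noncomputable def isColimitMapCofanEquiv {J : Type w} {F : J → V} (c : Cofan F) (L : V ⥤ D) :
    IsColimit (L.mapCocone c) ≃ IsColimit (Cofan.mk (L.obj c.pt) (fun j => L.map (c.inj j))) :=
  IsColimit.equivOfNatIsoOfIso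
    (Discrete.natIso (fun j => Iso.refl _) :
      Discrete.functor F ⋙ L ≅ Discrete.functor (fun j => L.obj (F j)))
    (L.mapCocone c) (Cofan.mk (L.obj c.pt) (fun j => L.map (c.inj j)))
    (Cocones.ext (Iso.refl _) (by rintro ⟨j⟩; simp [Cofan.inj]))

end MapCofan

section Strict

variable {V : Type u} [Category.{v} V] [HasTerminal V] [HasCoproducts.{w} V]

/-- The empty copower of the terminal object is initial. -/
noncomputable def isInitialCopowerEmpty :
    IsInitial (∐ fun _ : PEmpty.{w + 1} => (⊤_ V)) :=
  IsInitial.ofUniqueHom (fun Y => Sigma.desc (fun i => i.elim))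
    (fun Y m => by
      apply colimit.hom_ext
      rintro ⟨⟨⟩⟩)

/-- In an extensive category, initial objects are strict. -/
noncomputable def isInitialOfHomToInitial (hext : IsExtensive.{w} V) {A : V}
    (f : A ⟶ ∐ fun _ : PEmpty.{w + 1} => (⊤_ V)) : IsInitial A := by
  haveI := (hext.choose_spec (fun _ : PEmpty.{w + 1} => (⊤_ V))).some
  set E := overCoproduct (fun _ : PEmpty.{w + 1} => (⊤_ V)) with hEdef
  have hobj : E.inv.obj (Over.mk f) = E.inv.obj (Over.mk (𝟙 _)) := by
    funext i
    exact i.elim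
  have iso : Over.mk f ≅ Over.mk (𝟙 (∐ fun _ : PEmpty.{w + 1} => (⊤_ V))) :=
    (E.asEquivalence.counitIso.app _).symm ≪≫ eqToIso (congrArg E.obj hobj) ≪≫
      E.asEquivalence.counitIso.app _
  exact isInitialCopowerEmpty.ofIso ((Over.forget _).mapIso iso).symm

/-- Any two morphisms out of an object admitting a map into an initial object agree. -/
theorem hom_ext_of_to_initial (hext : IsExtensive.{w} V) {A D B : V} (hD : IsInitial D)
    (f : A ⟶ D) (f₁ f₂ : A ⟶ B) : f₁ = f₂ :=
  (isInitialOfHomToInitial hext (f ≫ hD.to _)).hom_ext f₁ f₂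

end Strict
section Mono

variable {V : Type u} [Category.{v} V] [HasTerminal V] [HasCoproducts.{w} V]

theorem over_hom_ext_of_mono {X : V} {P Q : Over X} (hQ : Mono Q.hom) (α β : P ⟶ Q) : α = β := by
  apply Over.OverMorphism.ext
  rw [← cancel_mono Q.hom, Over.w α, Over.w β]

/-- In an extensive category, coproduct injections are monomorphisms. -/
theorem mono_sigma_ι (hext : IsExtensive.{w} V) {J : Type w} (W : J → V) (j : J) :
    Mono (Sigma.ι W j) := by
  constructor
  intro T u v huv
  classical
  have hZ : IsInitial (∐ fun _ : PEmpty.{w + 1} => (⊤_ V)) := isInitialCopowerEmpty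
  -- the family concentrated at `j` with identity
  let b : ∀ j', Over (W j') := fun j' =>
    if e : j' = j then Over.mk (eqToHom (congrArg W e.symm)) else Over.mk (hZ.to (W j'))
  have hbj : b j = Over.mk (eqToHom (congrArg W (Eq.symm (rfl : j = j)))) := dif_pos rfl
  have hbne : ∀ j' (e : j' ≠ j), b j' = Over.mk (hZ.to (W j')) := fun j' e => dif_neg e
  have hleft : (b j).left = W j := by rw [hbj]; rfl
  have hleftne : ∀ j' (e : j' ≠ j), (b j').left = (∐ fun _ : PEmpty.{w + 1} => (⊤_ V)) := by
    intro j' e; rw [hbne j' e]; rfl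
  -- each structure map is monic
  have hmono : ∀ j', Mono ((b j').hom) := by
    intro j'
    by_cases e : j' = j
    · subst e
      rw [hbj]
      dsimp
      infer_instance
    · rw [hbne j' e]
      dsimp
      constructor
      intro T' p q hpq
      exact hom_ext_of_to_initial hext hZ p p q
  -- the canonical splitting `ρ : W j ⟶ ∐ (b •).left` and retraction `σ`
  let ρ : W j ⟶ ∐ (fun j' => (b j').left) := eqToHom hleft.symm ≫ Sigma.ι (fun j' => (b j').left) j
  have hQ1 : eqToHom hleft.symm ≫ (b j).hom = 𝟙 (W j) := by
    have h2 : HEq ((b j).hom) (𝟙 (W j)) := by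
      rw [hbj]
      exact HEq.rfl
    have h3 := (conj_eqToHom_iff_heq' ((b j).hom) (𝟙 (W j)) hleft rfl).mpr h2
    rw [h3]
    simp
  have hP1 : ρ ≫ Sigma.desc (fun j' => (b j').hom ≫ Sigma.ι W j') = Sigma.ι W j := by
    simp only [ρ, Category.assoc, colimit.ι_desc, Cofan.mk_pt, Cofan.mk_ι_app]
    rw [← Category.assoc, hQ1, Category.id_comp]
  let σ : (∐ fun j' => (b j').left) ⟶ W j := Sigma.desc (fun j' =>
    if e : j' = j then eqToHom (by rw [e]) ≫ eqToHom hleft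
    else eqToHom (hleftne j' e) ≫ hZ.to (W j))
  have hP3 : ρ ≫ σ = 𝟙 (W j) := by
    simp only [ρ, σ, Category.assoc, colimit.ι_desc, Cofan.mk_pt, Cofan.mk_ι_app]
    simp
  -- the extensivity equivalence for `W`
  haveI := (hext.choose_spec W).some
  let E := overCoproduct W
  -- morphisms into `E.obj b` from a fixed object are unique
  have hsub : ∀ (A : Over (∐ W)) (f g : A ⟶ E.obj b), f = g := by
    intro A f g
    let ca : E.obj (E.inv.obj A) ≅ A := E.asEquivalence.counitIso.app A
    obtain ⟨f', hf'⟩ := E.map_surjective (ca.hom ≫ f)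
    obtain ⟨g', hg'⟩ := E.map_surjective (ca.hom ≫ g)
    have hfg : f' = g' := by
      funext j'
      exact over_hom_ext_of_mono (hmono j') _ _
    rw [← cancel_epi ca.hom, ← hf', ← hg', hfg]
  -- build the two morphisms and conclude
  let A : Over (∐ W) := Over.mk (u ≫ Sigma.ι W j)
  let mu : A ⟶ E.obj b := Over.homMk (u ≫ ρ) (by
    show (u ≫ ρ) ≫ (Sigma.desc fun j' => (b j').hom ≫ Sigma.ι W j') = u ≫ Sigma.ι W j
    rw [Category.assoc, hP1])
  let mv : A ⟶ E.obj b := Over.homMk (v ≫ ρ) (by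
    show (v ≫ ρ) ≫ (Sigma.desc fun j' => (b j').hom ≫ Sigma.ι W j') = u ≫ Sigma.ι W j
    rw [Category.assoc, hP1, ← huv])
  have := congrArg CommaMorphism.left (hsub A mu mv)
  dsimp [mu, mv] at this
  calc u = (u ≫ ρ) ≫ σ := by rw [Category.assoc, hP3, Category.comp_id]
  _ = (v ≫ ρ) ≫ σ := by rw [show u ≫ ρ = v ≫ ρ from this]
  _ = v := by rw [Category.assoc, hP3, Category.comp_id]

end Mono

section Collapse

variable {V : Type u} [Category.{v} V] [HasCoproducts.{w} V]

open Classical in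
/-- The cofan collapsing a family whose members are all initial except possibly one. -/
noncomputable def collapseCofan {J : Type w} (F : J → V) (j₀ : J)
    (hinit : ∀ j, j ≠ j₀ → IsInitial (F j)) : Cofan F :=
  Cofan.mk (F j₀) (fun j => if e : j = j₀ then eqToHom (congrArg F e) else (hinit j e).to _)

open Classical in
theorem collapseCofan_inj_self {J : Type w} (F : J → V) (j₀ : J)
    (hinit : ∀ j, j ≠ j₀ → IsInitial (F j)) :
    (collapseCofan F j₀ hinit).inj j₀ = eqToHom (congrArg F rfl) := dif_pos rfl

open Classical in
theorem collapseCofan_inj_ne {J : Type w} (F : J → V) (j₀ : J)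
    (hinit : ∀ j, j ≠ j₀ → IsInitial (F j)) {j : J} (e : j ≠ j₀) :
    (collapseCofan F j₀ hinit).inj j = (hinit j e).to _ := dif_neg e

noncomputable def collapseIsColimit {J : Type w} (F : J → V) (j₀ : J)
    (hinit : ∀ j, j ≠ j₀ → IsInitial (F j)) : IsColimit (collapseCofan F j₀ hinit) :=
  mkCofanColimit _ (fun t => t.inj j₀)
    (fun t j => by
      by_cases e : j = j₀
      · subst e
        rw [collapseCofan_inj_self F j hinit]
        simp
        exact Category.id_comp _
      · rw [collapseCofan_inj_ne F j₀ hinit e]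
        exact (hinit j e).hom_ext _ _)
    (fun t m hm => by
      have h := hm j₀
      rw [collapseCofan_inj_self F j₀ hinit] at h
      simp at h
      exact (Category.id_comp m).symm.trans h)

end Collapse

section Connected

variable {V : Type u} [Category.{v} V] [HasCoproducts.{w} V]

/-- Unique factorization through coproduct injections implies connectedness. -/
theorem isConnectedObj_of_factorization (Y : V)
    (hfac : ∀ (J : Type w) (W : J → V) (h : Y ⟶ ∐ W),
      ∃! p : Σ j, (Y ⟶ W j), p.2 ≫ Sigma.ι W p.1 = h) : IsConnectedObj.{w} Y := by
  intro J
  constructor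
  refine ⟨fun {K} => ?_⟩
  haveI h1 : PreservesColimit (Discrete.functor (K.obj ∘ Discrete.mk)) (coyoneda.obj (op Y)) := by
    apply preservesColimit_of_preserves_colimit_cocone
      (coproductIsCoproduct (K.obj ∘ Discrete.mk))
    refine (isColimitMapCofanEquiv (Cofan.mk _ (Sigma.ι (K.obj ∘ Discrete.mk)))
      (coyoneda.obj (op Y))).symm ?_
    apply cofanTypes_isColimit
    intro x
    exact hfac J (K.obj ∘ Discrete.mk) x
  exact preservesColimit_of_iso_diagram _ (Discrete.natIsoFunctor (F := K)).symm

/-- Connectedness yields unique factorization through coproduct injections. -/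
theorem factorization_of_isConnectedObj (Y : V) (hY : IsConnectedObj.{w} Y)
    {J : Type w} (W : J → V) (h : Y ⟶ ∐ W) :
    ∃! p : Σ j, (Y ⟶ W j), p.2 ≫ Sigma.ι W p.1 = h := by
  haveI := (hY J).some
  have hc := (isColimitMapCofanEquiv (Cofan.mk (∐ W) (Sigma.ι W)) (coyoneda.obj (op Y)))
    (isColimitOfPreserves (coyoneda.obj (op Y)) (coproductIsCoproduct W))
  exact cofanTypes_existsUnique hc h

end Connected

section Backward

variable {V : Type u} [Category.{v} V] [HasTerminal V] [HasCoproducts.{w} V]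

theorem backward_decomp (hext : IsExtensive.{w} V) {L : V ⥤ Type w}
    (adj : L ⊣ copowerOne.{w} V) (X : V) :
    ∃ (I : Type w) (Y : I → V) (f : ∀ i, Y i ⟶ X),
      (∀ i, IsConnectedObj.{w} (Y i)) ∧ Nonempty (IsColimit (Cofan.mk X f)) := by
  classical
  -- transpose of a constant function
  have htrans : ∀ (C : V) (Jt : Type w) (j : Jt),
      (adj.homEquiv C Jt) (TypeCat.ofHom fun _ => j) = terminal.from C ≫ Sigma.ι (fun _ : Jt => ⊤_ V) j := by
    intro C Jt j
    rw [Adjunction.homEquiv_unit]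
    show adj.unit.app C ≫ Sigma.desc (fun _ => Sigma.ι (fun _ : Jt => ⊤_ V) j) = _
    have h1 : Sigma.desc (fun _ : L.obj C => Sigma.ι (fun _ : Jt => ⊤_ V) j)
        = terminal.from ((copowerOne.{w} V).obj (L.obj C)) ≫ Sigma.ι (fun _ : Jt => ⊤_ V) j := by
      apply colimit.hom_ext
      rintro ⟨i⟩
      simp only [colimit.ι_desc, Cofan.mk_pt, Cofan.mk_ι_app, colimit.ι_desc_assoc]
      exact ((Category.id_comp _).symm.trans (congrArg (· ≫ Sigma.ι (fun _ : Jt => ⊤_ V) j)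
        (show (colimit.ι (Discrete.functor fun _ : L.obj C => ⊤_ V) ⟨i⟩ ≫
          terminal.from ((copowerOne.{w} V).obj (L.obj C))) = 𝟙 (⊤_ V) from
            terminal.hom_ext _ _).symm)).trans (Category.assoc _ _ _)
    rw [h1, ← Category.assoc]
    congr 1
    apply terminal.hom_ext
  -- constant transposes detect equality of indices
  have hconstinj : ∀ (C : V) (Jt : Type w) (j j' : Jt),
      terminal.from C ≫ Sigma.ι (fun _ : Jt => ⊤_ V) j
        = terminal.from C ≫ Sigma.ι (fun _ : Jt => ⊤_ V) j' →
      TypeCat.ofHom (fun _ : L.obj C => j) = TypeCat.ofHom (fun _ => j') := by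
    intro C Jt j j' hj
    apply (adj.homEquiv C Jt).injective
    rw [htrans, htrans]
    exact hj
  -- objects with empty component set are initial
  have hinitOfEmpty : ∀ (C : V), IsEmpty (L.obj C) → IsInitial C := by
    intro C hC
    exact isInitialOfHomToInitial hext
      ((adj.homEquiv C PEmpty.{w + 1}) (TypeCat.ofHom fun y => (hC.false y).elim))
  -- decomposition of over-objects via extensivity
  have hdecomp : ∀ {J : Type w} (W : J → V) (A : Over (∐ W)),
      ∃ (C : ∀ j, Over (W j)) (iso : (∐ fun j => (C j).left) ≅ A.left),
        ∀ j, Sigma.ι (fun j => (C j).left) j ≫ iso.hom ≫ A.hom = (C j).hom ≫ Sigma.ι W j := by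
    intro J W A
    haveI := (hext.choose_spec W).some
    let E := overCoproduct W
    refine ⟨E.inv.obj A, (Over.forget _).mapIso (E.asEquivalence.counitIso.app A), ?_⟩
    intro j
    have hw := Over.w ((E.asEquivalence.counitIso.app A).hom)
    dsimp at hw
    show Sigma.ι (fun j => ((E.inv.obj A) j).left) j
        ≫ (E.asEquivalence.counitIso.hom.app A).left ≫ A.hom = _
    exact (congrArg (fun t => Sigma.ι (fun j => ((E.inv.obj A) j).left) j ≫ t) hw).trans (by
      show Sigma.ι (fun j => ((E.inv.obj A) j).left) j
          ≫ Sigma.desc (fun j => ((E.inv.obj A) j).hom ≫ Sigma.ι W j) = _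
      simp)
  -- the decomposition of `X` along the unit
  obtain ⟨C, iso, hcomp⟩ := hdecomp (fun _ : L.obj X => ⊤_ V) (Over.mk (adj.unit.app X))
  have hcolimX : IsColimit (Cofan.mk X
      (fun i => Sigma.ι (fun i => (C i).left) i ≫ iso.hom)) :=
    (coproductIsCoproduct _).ofIsoColimit (Cocones.ext iso (by rintro ⟨i⟩; rfl))
  -- the legs compose with the unit to constant maps
  have hdag : ∀ i, (Sigma.ι (fun i => (C i).left) i ≫ iso.hom) ≫ adj.unit.app X
      = terminal.from ((C i).left) ≫ Sigma.ι (fun _ : L.obj X => ⊤_ V) i := by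
    intro i
    rw [Category.assoc, show Sigma.ι (fun i => (C i).left) i ≫ iso.hom ≫ adj.unit.app X
      = (C i).hom ≫ Sigma.ι (fun _ : L.obj X => ⊤_ V) i from hcomp i]
    congr 1
    apply terminal.hom_ext
  have hLk : ∀ i, L.map (Sigma.ι (fun i => (C i).left) i ≫ iso.hom)
      = TypeCat.ofHom (fun _ => i : L.obj ((C i).left) → L.obj X) := by
    intro i
    apply (adj.homEquiv ((C i).left) (L.obj X)).injective
    rw [htrans, Adjunction.homEquiv_unit]
    have hnat := adj.unit.naturality (Sigma.ι (fun i => (C i).left) i ≫ iso.hom)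
    dsimp at hnat
    rw [← hnat]
    exact hdag i
  -- each `L.obj ((C i).left)` is a singleton
  haveI := (adj.leftAdjoint_preservesColimits : PreservesColimitsOfSize.{w, w} L)
  have hmap : IsColimit (Cofan.mk (L.obj X)
      (fun i => L.map (Sigma.ι (fun i => (C i).left) i ≫ iso.hom))) :=
    (isColimitMapCofanEquiv (Cofan.mk X (fun i => Sigma.ι (fun i => (C i).left) i ≫ iso.hom)) L)
      (isColimitOfPreserves L hcolimX)
  have hfac0 := cofanTypes_existsUnique hmap
  have hne : ∀ i, Nonempty (L.obj ((C i).left)) := by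
    intro i
    obtain ⟨p, hp, -⟩ := hfac0 i
    have h3 : L.map (Sigma.ι (fun i => (C i).left) p.1 ≫ iso.hom) p.2 = i := hp
    rw [hLk p.1] at h3
    exact h3 ▸ ⟨p.2⟩
  have hsubs : ∀ i (y y' : L.obj ((C i).left)), y = y' := by
    intro i y y'
    obtain ⟨p, hp, hu⟩ := hfac0 i
    have h1 : L.map (Sigma.ι (fun i => (C i).left) i ≫ iso.hom) y = i := by rw [hLk i]; rfl
    have h1' : L.map (Sigma.ι (fun i => (C i).left) i ≫ iso.hom) y' = i := by rw [hLk i]; rfl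
    have e1 := hu ⟨i, y⟩ h1
    have e2 := hu ⟨i, y'⟩ h1'
    have e3 := e1.trans e2.symm
    simpa using e3
  -- key unique-factorization property for each component
  have hfacY : ∀ i (J : Type w) (W' : J → V) (h : (C i).left ⟶ ∐ W'),
      ∃! p : Σ j, ((C i).left ⟶ W' j), p.2 ≫ Sigma.ι W' p.1 = h := by
    intro i J W' h
    set q : (∐ W') ⟶ ∐ fun _ : J => ⊤_ V :=
      Sigma.desc (fun j => terminal.from (W' j) ≫ Sigma.ι (fun _ : J => ⊤_ V) j) with hqdef
    have hqι : ∀ j, Sigma.ι W' j ≫ q =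
        terminal.from (W' j) ≫ Sigma.ι (fun _ : J => ⊤_ V) j := by
      intro j
      rw [hqdef]
      simp
    obtain ⟨y₀⟩ := hne i
    set j₀ := (adj.homEquiv ((C i).left) J).symm (h ≫ q) y₀ with hj₀
    have huc : (adj.homEquiv ((C i).left) J).symm (h ≫ q) = TypeCat.ofHom fun _ => j₀ :=
      ConcreteCategory.hom_ext _ _ fun y => by rw [hsubs i y y₀]; rfl
    have hq : h ≫ q = terminal.from ((C i).left) ≫ Sigma.ι (fun _ : J => ⊤_ V) j₀ := by
      rw [← htrans]
      exact ((adj.homEquiv ((C i).left) J).apply_symm_apply (h ≫ q)).symm.trans (by rw [huc])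
    obtain ⟨C', ψ, hcomp'⟩ := hdecomp W' (Over.mk h)
    have hinit : ∀ j, j ≠ j₀ → IsInitial ((C' j).left) := by
      intro j hj
      have h1 : terminal.from ((C' j).left) ≫ Sigma.ι (fun _ : J => ⊤_ V) j
          = terminal.from ((C' j).left) ≫ Sigma.ι (fun _ : J => ⊤_ V) j₀ := by
        have h2 : Sigma.ι (fun j => (C' j).left) j ≫ ψ.hom ≫ h ≫ q
            = ((C' j).hom ≫ terminal.from (W' j)) ≫ Sigma.ι (fun _ : J => ⊤_ V) j := by
          calc Sigma.ι (fun j => (C' j).left) j ≫ ψ.hom ≫ h ≫ q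
              = (Sigma.ι (fun j => (C' j).left) j ≫ ψ.hom ≫ h) ≫ q := by
                simp only [Category.assoc]
            _ = ((C' j).hom ≫ Sigma.ι W' j) ≫ q := by
                rw [show Sigma.ι (fun j => (C' j).left) j ≫ ψ.hom ≫ h
                  = (C' j).hom ≫ Sigma.ι W' j from hcomp' j]
            _ = (C' j).hom ≫ Sigma.ι W' j ≫ q := by simp only [Category.assoc]
            _ = (C' j).hom ≫ terminal.from (W' j) ≫ Sigma.ι (fun _ : J => ⊤_ V) j := by
                rw [hqι j]
            _ = ((C' j).hom ≫ terminal.from (W' j)) ≫ Sigma.ι (fun _ : J => ⊤_ V) j := by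
                simp only [Category.assoc]
        have h3 : Sigma.ι (fun j => (C' j).left) j ≫ ψ.hom ≫ h ≫ q
            = (Sigma.ι (fun j => (C' j).left) j ≫ ψ.hom ≫ terminal.from ((C i).left))
              ≫ Sigma.ι (fun _ : J => ⊤_ V) j₀ := by
          rw [show h ≫ q = terminal.from ((C i).left) ≫ Sigma.ι (fun _ : J => ⊤_ V) j₀ from hq]
          simp only [Category.assoc]
        rw [show terminal.from ((C' j).left) = (C' j).hom ≫ terminal.from (W' j)
          from terminal.hom_ext _ _]
        rw [h2.symm.trans h3]
        rw [show Sigma.ι (fun j => (C' j).left) j ≫ ψ.hom ≫ terminal.from ((C i).left)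
          = (C' j).hom ≫ terminal.from (W' j) from terminal.hom_ext _ _]
      refine hinitOfEmpty _ ⟨fun y => hj ?_⟩
      exact ConcreteCategory.congr_hom (hconstinj _ J j j₀ h1) y
    let μ : (∐ fun j => (C' j).left) ≅ (C' j₀).left := (coproductIsCoproduct (fun j => (C' j).left)).coconePointUniqueUpToIso
      (collapseIsColimit (fun j => (C' j).left) j₀ hinit)
    have hμ : ∀ j, Sigma.ι (fun j => (C' j).left) j ≫ μ.hom
        = (collapseCofan (fun j => (C' j).left) j₀ hinit).inj j := fun j =>
      (coproductIsCoproduct (fun j => (C' j).left)).comp_coconePointUniqueUpToIso_hom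
        (collapseIsColimit _ j₀ hinit) ⟨j⟩
    have hmain : (ψ.inv ≫ μ.hom ≫ (C' j₀).hom) ≫ Sigma.ι W' j₀ = h := by
      rw [Category.assoc, Category.assoc, Iso.inv_comp_eq]
      apply colimit.hom_ext
      rintro ⟨j⟩
      show Sigma.ι (fun j => (C' j).left) j ≫ μ.hom ≫ (C' j₀).hom ≫ Sigma.ι W' j₀
          = Sigma.ι (fun j => (C' j).left) j ≫ ψ.hom ≫ h
      by_cases e : j = j₀
      · subst e
        rw [← Category.assoc, hμ j₀, collapseCofan_inj_self]
        simp only [eqToHom_refl, Category.id_comp]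
        exact (hcomp' j₀).symm
      · exact (hinit j e).hom_ext _ _
    refine ⟨⟨j₀, ψ.inv ≫ μ.hom ≫ (C' j₀).hom⟩, hmain, ?_⟩
    rintro ⟨j, g⟩ hg
    have hj : j = j₀ := by
      have h2 : h ≫ q = terminal.from ((C i).left) ≫ Sigma.ι (fun _ : J => ⊤_ V) j := by
        rw [← hg, Category.assoc, hqι j, ← Category.assoc]
        rw [show g ≫ terminal.from (W' j) = terminal.from ((C i).left) from terminal.hom_ext _ _]
      have h3 := h2.symm.trans hq
      obtain ⟨y⟩ := hne i
      exact ConcreteCategory.congr_hom (hconstinj _ J j j₀ h3) y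
    subst hj
    haveI := mono_sigma_ι hext W' j₀
    have hgg : g = ψ.inv ≫ μ.hom ≫ (C' j₀).hom := by
      apply (cancel_mono (Sigma.ι W' j₀)).1
      rw [hg, hmain]
    rw [hgg]
  exact ⟨L.obj X, fun i => (C i).left, fun i => Sigma.ι (fun i => (C i).left) i ≫ iso.hom,
    fun i => isConnectedObj_of_factorization _ (hfacY i), ⟨hcolimX⟩⟩

end Backward

section Forward

variable {V : Type u} [Category.{v} V] [HasTerminal V] [HasCoproducts.{w} V]

theorem forward_adjoint
    (hdec : ∀ X : V, ∃ (I : Type w) (Y : I → V) (f : ∀ i, Y i ⟶ X),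
      (∀ i, IsConnectedObj.{w} (Y i)) ∧ Nonempty (IsColimit (Cofan.mk X f))) :
    (copowerOne.{w} V).IsRightAdjoint := by
  choose I Y f hconn hcolim using hdec
  have hpt : ∀ (X : V) (i : I X) (Z : Type w) (u : Y X i ⟶ (copowerOne.{w} V).obj Z),
      ∃! z : Z, terminal.from (Y X i) ≫ Sigma.ι (fun _ : Z => ⊤_ V) z = u := by
    intro X i Z u
    obtain ⟨p, hp, hu⟩ := factorization_of_isConnectedObj (Y X i) (hconn X i)
      (fun _ : Z => ⊤_ V) u
    refine ⟨p.1, ?_, ?_⟩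
    · rw [show terminal.from (Y X i) = p.2 from terminal.hom_ext _ _]
      exact hp
    · intro z hz
      exact congrArg Sigma.fst (hu ⟨z, terminal.from _⟩ hz)
  have hfac : ∀ (X : V) (Z : Type w) (g : I X → Z) (i : I X),
      f X i ≫ (hcolim X).some.desc (Cofan.mk (∐ fun _ : Z => ⊤_ V) (fun i =>
          terminal.from (Y X i) ≫ Sigma.ι (fun _ : Z => ⊤_ V) (g i)))
        = terminal.from (Y X i) ≫ Sigma.ι (fun _ : Z => ⊤_ V) (g i) :=
    fun X Z g i => (hcolim X).some.fac _ ⟨i⟩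
  let e : ∀ (X : V) (Z : Type w), (I X ⟶ Z) ≃ (X ⟶ (copowerOne.{w} V).obj Z) := fun X Z =>
    { toFun := fun g => (hcolim X).some.desc (Cofan.mk (∐ fun _ : Z => ⊤_ V) (fun i =>
        terminal.from (Y X i) ≫ Sigma.ι (fun _ : Z => ⊤_ V) (g i)))
      invFun := fun u => TypeCat.ofHom fun i => (hpt X i Z (f X i ≫ u)).choose
      left_inv := by
        intro g
        apply ConcreteCategory.hom_ext; intro i
        exact ((hpt X i Z _).choose_spec.2 (g i) (hfac X Z g i).symm).symm
      right_inv := by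
        intro u
        apply Cofan.IsColimit.hom_ext (hcolim X).some
        intro i
        show f X i ≫ (hcolim X).some.desc (Cofan.mk (∐ fun _ : Z => ⊤_ V) (fun i =>
            terminal.from (Y X i) ≫ Sigma.ι (fun _ : Z => ⊤_ V)
              ((hpt X i Z (f X i ≫ u)).choose))) = f X i ≫ u
        rw [hfac X Z (fun i => (hpt X i Z (f X i ≫ u)).choose) i]
        exact (hpt X i Z (f X i ≫ u)).choose_spec.1 }
  have he : ∀ (X : V) (Z Z' : Type w) (g : Z ⟶ Z') (h : I X ⟶ Z),
      e X Z' (h ≫ g) = e X Z h ≫ (copowerOne.{w} V).map g := by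
    intro X Z Z' g h
    apply Cofan.IsColimit.hom_ext (hcolim X).some
    intro i
    show f X i ≫ (hcolim X).some.desc (Cofan.mk (∐ fun _ : Z' => ⊤_ V) (fun i =>
        terminal.from (Y X i) ≫ Sigma.ι (fun _ : Z' => ⊤_ V) ((h ≫ g) i)))
      = f X i ≫ ((hcolim X).some.desc (Cofan.mk (∐ fun _ : Z => ⊤_ V) (fun i =>
        terminal.from (Y X i) ≫ Sigma.ι (fun _ : Z => ⊤_ V) (h i)))) ≫ (copowerOne.{w} V).map g
    rw [hfac X Z' (h ≫ g) i]
    refine (Eq.trans ?_ (congrArg (· ≫ (copowerOne.{w} V).map g) (hfac X Z h i).symm)).trans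
      (Category.assoc _ _ _)
    show terminal.from (Y X i) ≫ Sigma.ι (fun _ : Z' => ⊤_ V) (g (h i))
      = (terminal.from (Y X i) ≫ Sigma.ι (fun _ : Z => ⊤_ V) (h i))
        ≫ Sigma.desc (fun z => Sigma.ι (fun _ : Z' => ⊤_ V) (g z))
    simp
  exact ⟨_, ⟨Adjunction.adjunctionOfEquivLeft e he⟩⟩

end Forward

/-- For a lextensive category `V`, every object of `V` is a coproduct of
connected objects iff the functor `(−)·1 : Set ⥤ V` has a left adjoint. -/
theorem stmt1 (V : Type u) [Category.{v} V] [HasFiniteLimits V] [HasCoproducts.{w} V]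
    (hext : IsExtensive.{w} V) :
    (∀ X : V, ∃ (I : Type w) (Y : I → V) (f : ∀ i, Y i ⟶ X),
      (∀ i, IsConnectedObj.{w} (Y i)) ∧ Nonempty (IsColimit (Cofan.mk X f))) ↔
    (copowerOne.{w} V).IsRightAdjoint := by
  constructor
  · exact forward_adjoint
  · intro hR
    obtain ⟨L, ⟨adj⟩⟩ := hR.exists_leftAdjoint
    exact backward_decomp hext adj

end Paper
end

section
/- If V is cocomplete then the category GV of V-enriched graphs is cocomplete, and the underlying-object-set functor (−)₀ : GV → Set is cocontinuous. -/
open CategoryTheory CategoryTheory.Limits Opposite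

universe w v u

namespace Paper

/-- A `V`-enriched graph: a set of objects together with a hom object of `V` for each
ordered pair of objects. -/
structure VGraph (V : Type u) [Category.{v} V] : Type (max u (w + 1)) where
  objs : Type w
  hom : objs → objs → V

variable {V : Type u} [Category.{v} V]

/-- A morphism of `V`-enriched graphs. -/
structure VGraphHom (X Y : VGraph.{w} V) : Type (max w v) where
  toFun : X.objs → Y.objs
  homMap : ∀ a b : X.objs, X.hom a b ⟶ Y.hom (toFun a) (toFun b)

theorem VGraphHom.ext' {X Y : VGraph.{w} V} (f g : VGraphHom X Y)
    (h1 : f.toFun = g.toFun) (h2 : HEq f.homMap g.homMap) : f = g := by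
  cases f; cases g; cases h1; cases h2; rfl

instance : Category.{max w v} (VGraph.{w} V) where
  Hom := VGraphHom
  id X := ⟨fun a => a, fun a b => 𝟙 (X.hom a b)⟩
  comp f g := ⟨fun a => g.toFun (f.toFun a), fun a b => f.homMap a b ≫ g.homMap _ _⟩
  id_comp f := VGraphHom.ext' _ _ rfl (heq_of_eq (by
    funext a b
    exact Category.id_comp _))
  comp_id f := VGraphHom.ext' _ _ rfl (heq_of_eq (by
    funext a b
    exact Category.comp_id _))
  assoc f g h := VGraphHom.ext' _ _ rfl (heq_of_eq (by
    funext a b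
    exact Category.assoc _ _ _))

/-- The underlying-object-set functor `GV ⥤ Set`. -/
def objectsFunctor (V : Type u) [Category.{v} V] : VGraph.{w} V ⥤ Type w where
  obj X := X.objs
  map f := TypeCat.ofHom f.toFun

section Aux

@[simp] lemma id_toFun (X : VGraph.{w} V) (a : X.objs) : (𝟙 X : X ⟶ X).toFun a = a := rfl

@[simp] lemma comp_toFun {X Y Z : VGraph.{w} V} (f : X ⟶ Y) (g : Y ⟶ Z) (a : X.objs) :
    (f ≫ g).toFun a = g.toFun (f.toFun a) := rfl

@[simp] lemma id_homMap (X : VGraph.{w} V) (a b : X.objs) :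
    (𝟙 X : X ⟶ X).homMap a b = 𝟙 (X.hom a b) := rfl

@[simp] lemma comp_homMap {X Y Z : VGraph.{w} V} (f : X ⟶ Y) (g : Y ⟶ Z) (a b : X.objs) :
    (f ≫ g).homMap a b = f.homMap a b ≫ g.homMap (f.toFun a) (f.toFun b) := rfl

lemma homMap_congr {X Y : VGraph.{w} V} {f g : X ⟶ Y} (h : f = g) (a b : X.objs) :
    f.homMap a b = g.homMap a b ≫ eqToHom (by rw [h]) := by
  subst h; simp

lemma homMap_congr_pt {X Y : VGraph.{w} V} (f : X ⟶ Y) {a a' b b' : X.objs}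
    (ha : a = a') (hb : b = b') :
    f.homMap a b = eqToHom (by rw [ha, hb]) ≫ f.homMap a' b' ≫ eqToHom (by rw [ha, hb]) := by
  subst ha; subst hb; simp

lemma VGraphHom.ext2 {X Y : VGraph.{w} V} (f g : X ⟶ Y)
    (h1 : ∀ a, f.toFun a = g.toFun a)
    (h2 : ∀ a b, f.homMap a b ≫ eqToHom (by rw [h1 a, h1 b]) = g.homMap a b) : f = g := by
  obtain ⟨ft, fh⟩ := f; obtain ⟨gt, gh⟩ := g
  have h1' : ft = gt := funext h1
  subst h1'
  have : fh = gh := by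
    funext a b
    simpa using h2 a b
  rw [this]

variable [HasColimitsOfSize.{w, w} V]
variable {J : Type w} [Category.{w} J] (F : J ⥤ VGraph.{w} V)

/-- The object set of the colimit graph. -/
abbrev O := colimit (F ⋙ objectsFunctor.{w} V)

/-- The indexing category for the hom-object colimit. -/
structure Idx (a b : O F) : Type w where
  j : J
  u : (F.obj j).objs
  v : (F.obj j).objs
  hu : colimit.ι (F ⋙ objectsFunctor.{w} V) j u = a
  hv : colimit.ι (F ⋙ objectsFunctor.{w} V) j v = b

structure IdxHom {a b : O F} (x y : Idx F a b) : Type w where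
  f : x.j ⟶ y.j
  hu : (F.map f).toFun x.u = y.u
  hv : (F.map f).toFun x.v = y.v

lemma IdxHom.ext'' {a b : O F} {x y : Idx F a b} (f g : IdxHom F x y) (h : f.f = g.f) :
    f = g := by
  cases f; cases g; cases h; rfl

instance {a b : O F} : Category (Idx F a b) where
  Hom := IdxHom F
  id x := ⟨𝟙 x.j, by simp [F.map_id], by simp [F.map_id]⟩
  comp {x y z} f g := ⟨f.f ≫ g.f, by simp [F.map_comp, f.hu, g.hu], by
    simp [F.map_comp, f.hv, g.hv]⟩
  id_comp f := IdxHom.ext'' _ _ _ (Category.id_comp _)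
  comp_id f := IdxHom.ext'' _ _ _ (Category.comp_id _)
  assoc f g h := IdxHom.ext'' _ _ _ (Category.assoc _ _ _)

@[simp] lemma Idx.id_f {a b : O F} (x : Idx F a b) : (𝟙 x : IdxHom F x x).f = 𝟙 x.j := rfl
@[simp] lemma Idx.comp_f {a b : O F} {x y z : Idx F a b} (f : x ⟶ y) (g : y ⟶ z) :
    (f ≫ g).f = f.f ≫ g.f := rfl

/-- The diagram in `V` whose colimit is the hom object of the colimit graph. -/
def D (a b : O F) : Idx F a b ⥤ V where
  obj x := (F.obj x.j).hom x.u x.v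
  map {x y} f := (F.map f.f).homMap x.u x.v ≫ eqToHom (by rw [f.hu, f.hv])
  map_id x := by
    rw [homMap_congr (show F.map (𝟙 x : IdxHom F x x).f = 𝟙 (F.obj x.j) by
      simp [show (𝟙 x : IdxHom F x x).f = 𝟙 x.j from rfl])]
    simp
  map_comp {x y z} f g := by
    rw [homMap_congr (show F.map (f ≫ g : IdxHom F x z).f = F.map f.f ≫ F.map g.f by
      simp [show (f ≫ g : IdxHom F x z).f = f.f ≫ g.f from rfl])]
    simp only [comp_homMap, Category.assoc]
    rw [homMap_congr_pt (F.map g.f) f.hu.symm f.hv.symm]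
    simp

/-- The colimit graph. -/
noncomputable def colimGraph : VGraph.{w} V := ⟨O F, fun a b => colimit (D F a b)⟩

lemma ι_eqToHom {a b a' b' : O F} (ha : a = a') (hb : b = b') (x : Idx F a b) :
    colimit.ι (D F a b) x ≫ eqToHom (show colimit (D F a b) = colimit (D F a' b') by
      rw [ha, hb]) =
    colimit.ι (D F a' b') ⟨x.j, x.u, x.v, by rw [x.hu, ha], by rw [x.hv, hb]⟩ := by
  subst ha; subst hb
  cases x
  simp

/-- The colimit cocone. -/
noncomputable def colimCocone : Cocone F where
  pt := colimGraph F
  ι :=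
    { app := fun j =>
        ⟨colimit.ι (F ⋙ objectsFunctor.{w} V) j,
          fun u v => colimit.ι (D F _ _) ⟨j, u, v, rfl, rfl⟩⟩
      naturality := fun j j' f => by
        have hO : ∀ u, colimit.ι (F ⋙ objectsFunctor.{w} V) j' ((F.map f).toFun u) =
            colimit.ι (F ⋙ objectsFunctor.{w} V) j u := fun u =>
          ConcreteCategory.congr_hom (colimit.w (F ⋙ objectsFunctor.{w} V) f) u
        apply VGraphHom.ext2
        case h1 => exact hO
        intro u v
        show ((F.map f).homMap u v ≫ colimit.ι (D F _ _) ⟨j', _, _, rfl, rfl⟩) ≫ _ =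
          colimit.ι (D F _ _) ⟨j, u, v, rfl, rfl⟩ ≫ 𝟙 _
        erw [Category.assoc, ι_eqToHom F (hO u) (hO v)]
        have := colimit.w (D F (colimit.ι (F ⋙ objectsFunctor.{w} V) j u)
            (colimit.ι (F ⋙ objectsFunctor.{w} V) j v))
          (show (⟨j, u, v, rfl, rfl⟩ : Idx F _ _) ⟶
              ⟨j', (F.map f).toFun u, (F.map f).toFun v, hO u, hO v⟩ from ⟨f, rfl, rfl⟩)
        simp only [D] at this ⊢
        simpa using this }

/-- The object map of the descent morphism. -/
noncomputable def descO (s : Cocone F) : O F → s.pt.objs :=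
  colimit.desc (F ⋙ objectsFunctor.{w} V) ((objectsFunctor.{w} V).mapCocone s)

lemma descO_ι (s : Cocone F) (j : J) (u : (F.obj j).objs) :
    descO F s (colimit.ι (F ⋙ objectsFunctor.{w} V) j u) = (s.ι.app j).toFun u :=
  ConcreteCategory.congr_hom (colimit.ι_desc ((objectsFunctor.{w} V).mapCocone s) j) u

lemma descO_eq_u (s : Cocone F) {a b : O F} (x : Idx F a b) :
    descO F s a = (s.ι.app x.j).toFun x.u := by
  rcases x with ⟨j, u, v, hu, hv⟩
  subst hu
  exact descO_ι F s j u

lemma descO_eq_v (s : Cocone F) {a b : O F} (x : Idx F a b) :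
    descO F s b = (s.ι.app x.j).toFun x.v := by
  rcases x with ⟨j, u, v, hu, hv⟩
  subst hv
  exact descO_ι F s j v

/-- The cocone over `D F a b` used to define the hom components of the descent morphism. -/
noncomputable def descCocone (s : Cocone F) (a b : O F) : Cocone (D F a b) where
  pt := s.pt.hom (descO F s a) (descO F s b)
  ι :=
    { app := fun x => (s.ι.app x.j).homMap x.u x.v ≫ eqToHom
        ((congrArg₂ s.pt.hom (descO_eq_u F s x) (descO_eq_v F s x)).symm)
      naturality := fun x y m => by
        have hc : F.map m.f ≫ s.ι.app y.j = s.ι.app x.j := by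
          simpa using s.ι.naturality m.f
        dsimp only [D]
        rw [homMap_congr hc.symm x.u x.v]
        simp only [comp_homMap, Category.assoc]
        rw [homMap_congr_pt (s.ι.app y.j) m.hu.symm m.hv.symm]
        simp }

/-- The descent morphism. -/
noncomputable def descHom (s : Cocone F) : (colimCocone F).pt ⟶ s.pt :=
  ⟨descO F s, fun (a b : O F) => colimit.desc (D F a b) (descCocone F s a b)⟩

noncomputable def colimIsColimit : IsColimit (colimCocone F) where
  desc := descHom F
  fac s j := by
    apply VGraphHom.ext2
    case h1 =>
      intro a
      exact descO_ι F s j a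
    intro u v
    show (colimit.ι (D F _ _) ⟨j, u, v, rfl, rfl⟩ ≫
        colimit.desc (D F _ _) (descCocone F s _ _)) ≫ _ = _
    rw [colimit.ι_desc]
    show ((s.ι.app j).homMap u v ≫ eqToHom _) ≫ eqToHom _ = _
    simp
    erw [eqToHom_trans]
    exact Category.comp_id _
  uniq s m hm := by
    have h1 : ∀ a, m.toFun a = (descHom F s).toFun a := by
      intro a
      have hmor : (show colimit (F ⋙ objectsFunctor.{w} V) ⟶ s.pt.objs from TypeCat.ofHom (m.toFun : O F → s.pt.objs)) =
          colimit.desc (F ⋙ objectsFunctor.{w} V) ((objectsFunctor.{w} V).mapCocone s) := by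
        apply colimit.hom_ext
        intro j
        refine Eq.trans ?_ (colimit.ι_desc ((objectsFunctor.{w} V).mapCocone s) j).symm
        ext u
        exact congrFun (congrArg VGraphHom.toFun (hm j)) u
      exact ConcreteCategory.congr_hom hmor a
    apply VGraphHom.ext2 (h1 := h1)
    intro (a : O F) (b : O F)
    apply colimit.hom_ext
    intro x
    obtain ⟨j, u, v, hu, hv⟩ := x
    subst hu; subst hv
    show colimit.ι (D F _ _) ⟨j, u, v, rfl, rfl⟩ ≫ m.homMap _ _ ≫ eqToHom _ =
      colimit.ι (D F _ _) ⟨j, u, v, rfl, rfl⟩ ≫ colimit.desc (D F _ _) (descCocone F s _ _)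
    erw [colimit.ι_desc, ← Category.assoc]
    show ((colimCocone F).ι.app j ≫ m).homMap u v ≫ eqToHom _ =
      (descCocone F s _ _).ι.app ⟨j, u, v, rfl, rfl⟩
    rw [homMap_congr (hm j) u v]
    simp [descCocone]
    erw [eqToHom_trans]
    rfl

end Aux

/-- If `V` is cocomplete then so is the category of `V`-enriched graphs,
and the underlying-object-set functor is cocontinuous. -/
theorem stmt5 (V : Type u) [Category.{v} V] [HasColimitsOfSize.{w, w} V] :
    HasColimitsOfSize.{w, w} (VGraph.{w} V) ∧
      Nonempty (PreservesColimitsOfSize.{w, w} (objectsFunctor.{w} V)) := by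
  have hcolim : HasColimitsOfSize.{w, w} (VGraph.{w} V) :=
    ⟨fun J _ => ⟨fun F => HasColimit.mk ⟨colimCocone F, colimIsColimit F⟩⟩⟩
  refine ⟨hcolim, ⟨⟨fun {J} _ => ⟨fun {F} => ⟨fun {c} hc => ?_⟩⟩⟩⟩⟩
  have hmap : IsColimit ((objectsFunctor.{w} V).mapCocone (colimCocone F)) := by
    refine IsColimit.ofIsoColimit (colimit.isColimit (F ⋙ objectsFunctor.{w} V))
      (Cocones.ext (Iso.refl _) ?_)
    intro j
    rfl
  exact ⟨IsColimit.ofIsoColimit hmap ((Cocones.functoriality F (objectsFunctor.{w} V)).mapIso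
    ((colimIsColimit F).uniqueUpToIso hc))⟩

end Paper
end

section
/- Let C be a small category and C₊ the category obtained from C by adjoining a new object 0 and, for each object C of C, two maps σ_C, τ_C : 0 → C₊ (where C ↦ C₊ is the inclusion of C into C₊), subject to f₊ σ_C = σ_D and f₊ τ_C = τ_D for every f : C → D in C. Then the category of presheaf-of-sets-enriched graphs G(PSh(C)) is equivalent to PSh(C₊). In particular, if V is a presheaf topos then so is GV. -/
open CategoryTheory CategoryTheory.Limits Opposite

universe w v u

namespace Paper

variable {V : Type u} [Category.{v} V]

/-- Morphisms of the category `C₊`: it has the objects of `C` (as `some c`) together with a new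
object `0` (as `none`); there are two maps `σ_c, τ_c : 0 ⟶ c₊` for each object `c` of `C`,
and composition satisfies `f₊ ∘ σ_c = σ_d` and `f₊ ∘ τ_c = τ_d`. -/
inductive PlusHom {C : Type u} [Category.{v} C] : Option C → Option C → Type (max u v)
  | id0 : PlusHom none none
  | sigma (c : C) : PlusHom none (some c)
  | tau (c : C) : PlusHom none (some c)
  | of {c d : C} (f : c ⟶ d) : PlusHom (some c) (some d)

/-- The category `C₊` obtained from `C` by adjoining an object `0` with two maps
`σ_c, τ_c : 0 ⟶ c₊` for each `c`. -/
def CPlus (C : Type u) [Category.{v} C] : Type u := Option C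

section CPlusCat

variable {C : Type u} [Category.{v} C]

/-- Composition in `C₊`. -/
def PlusHom.comp : ∀ {x y z : Option C}, PlusHom x y → PlusHom y z → PlusHom x z
  | _, _, _, .id0, g => g
  | _, _, _, .sigma _, .of _ => .sigma _
  | _, _, _, .tau _, .of _ => .tau _
  | _, _, _, .of f, .of g => .of (f ≫ g)

instance : Category.{max u v} (CPlus C) where
  Hom x y := PlusHom (C := C) x y
  id x := match x with
    | none => .id0
    | some c => .of (𝟙 c)
  comp f g := f.comp g
  id_comp {x y} f := by
    cases f <;> simp [PlusHom.comp]
  comp_id {x y} f := by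
    cases f <;> simp [PlusHom.comp]
  assoc {x y z w} f g h := by
    cases f <;> cases g <;> cases h <;> simp [PlusHom.comp]

end CPlusCat

section Main

variable {C : Type v} [SmallCategory C]

/-- The object `0` of `C₊`. -/
abbrev o0 : CPlus C := none
/-- The object `c₊` of `C₊`. -/
abbrev oS (c : C) : CPlus C := some c
/-- `σ_c` as a morphism of `C₊`. -/
abbrev sHom (c : C) : (o0 : CPlus C) ⟶ oS c := PlusHom.sigma c
/-- `τ_c` as a morphism of `C₊`. -/
abbrev tHom (c : C) : (o0 : CPlus C) ⟶ oS c := PlusHom.tau c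
/-- `f₊` as a morphism of `C₊`. -/
abbrev fHom {c d : C} (f : c ⟶ d) : (oS c : CPlus C) ⟶ oS d := PlusHom.of f

/-- Object part of the presheaf associated to a `PSh C`-graph. -/
def objFun (X : VGraph.{v} (Cᵒᵖ ⥤ Type v)) : Option C → Type v
  | none => X.objs
  | some c => Σ (a : X.objs) (b : X.objs), (X.hom a b).obj (op c)

/-- Action of morphisms of `C₊` on `objFun`. -/
def mapFun (X : VGraph.{v} (Cᵒᵖ ⥤ Type v)) :
    ∀ {x y : Option C}, PlusHom x y → objFun X y → objFun X x
  | _, _, .id0 => id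
  | _, _, .sigma _ => fun p => p.1
  | _, _, .tau _ => fun p => p.2.1
  | _, _, .of f => fun p => ⟨p.1, p.2.1, (X.hom p.1 p.2.1).map f.op p.2.2⟩

lemma mapFun_comp (X : VGraph.{v} (Cᵒᵖ ⥤ Type v)) {x y z : Option C}
    (f : PlusHom x y) (g : PlusHom y z) :
    mapFun X (f.comp g) = fun p => mapFun X f (mapFun X g p) := by
  cases f <;> cases g <;> funext p <;> simp [PlusHom.comp, mapFun] <;> rfl

/-- The presheaf on `C₊` associated to a `PSh C`-graph. -/
def phiObj (X : VGraph.{v} (Cᵒᵖ ⥤ Type v)) : (CPlus C)ᵒᵖ ⥤ Type v where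
  obj x := objFun X x.unop
  map g := TypeCat.ofHom (mapFun X g.unop)
  map_id x := by
    obtain ⟨(_ | c)⟩ := x
    · rfl
    · apply ConcreteCategory.hom_ext
      intro p
      show (⟨p.1, p.2.1, (X.hom p.1 p.2.1).map ((𝟙 c).op) p.2.2⟩ : objFun X (some c)) = p
      have h : (X.hom p.1 p.2.1).map ((𝟙 c).op) p.2.2 = p.2.2 := by simp
      rw [h]
      rfl
  map_comp {x y z} g h := by
    exact congrArg TypeCat.ofHom (mapFun_comp X h.unop g.unop)

/-- Action of a graph morphism on the associated presheaves. -/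
def appFun {X Y : VGraph.{v} (Cᵒᵖ ⥤ Type v)} (f : VGraphHom X Y) :
    ∀ x : Option C, objFun X x → objFun Y x
  | none => f.toFun
  | some c => fun p => ⟨f.toFun p.1, f.toFun p.2.1, (f.homMap p.1 p.2.1).app (op c) p.2.2⟩

lemma appFun_natural {X Y : VGraph.{v} (Cᵒᵖ ⥤ Type v)} (f : VGraphHom X Y)
    {x y : Option C} (g : PlusHom x y) (p : objFun X y) :
    appFun f x (mapFun X g p) = mapFun Y g (appFun f y p) := by
  cases g with
  | id0 => rfl
  | sigma c => rfl
  | tau c => rfl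
  | @of c d g =>
    exact congrArg (fun t => (⟨f.toFun p.1, f.toFun p.2.1, t⟩ : objFun Y (some c)))
      (types_congr_hom ((f.homMap p.1 p.2.1).naturality g.op) p.2.2)

/-- The functor `G(PSh C) ⥤ PSh(C₊)`. -/
def phi : VGraph.{v} (Cᵒᵖ ⥤ Type v) ⥤ ((CPlus C)ᵒᵖ ⥤ Type v) where
  obj := phiObj
  map f :=
    { app := fun x => TypeCat.ofHom (appFun f x.unop)
      naturality := fun x y g => by
        apply ConcreteCategory.hom_ext
        intro p
        exact appFun_natural f g.unop p }
  map_id X := by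
    apply NatTrans.ext
    funext x
    obtain ⟨(_ | c)⟩ := x
    · rfl
    · rfl
  map_comp f g := by
    apply NatTrans.ext
    funext x
    obtain ⟨(_ | c)⟩ := x <;> rfl

/-- The graph associated to a presheaf on `C₊`. -/
def psiObj (F : (CPlus C)ᵒᵖ ⥤ Type v) : VGraph.{v} (Cᵒᵖ ⥤ Type v) where
  objs := F.obj (op o0)
  hom a b :=
    { obj := fun c => { x : F.obj (op (oS c.unop)) //
        F.map (sHom c.unop).op x = a ∧ F.map (tHom c.unop).op x = b }
      map := fun {c c'} g => TypeCat.ofHom fun x => ⟨F.map (fHom g.unop).op x.val, by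
        constructor
        · rw [← FunctorToTypes.map_comp_apply]
          exact x.2.1
        · rw [← FunctorToTypes.map_comp_apply]
          exact x.2.2⟩
      map_id := fun c => by
        apply ConcreteCategory.hom_ext
        intro x
        apply Subtype.ext
        show F.map (𝟙 (op (oS c.unop))) x.val = x.val
        simp
      map_comp := fun {c c' c''} g h => by
        apply ConcreteCategory.hom_ext
        intro x
        apply Subtype.ext
        show F.map ((fHom g.unop).op ≫ (fHom h.unop).op) x.val = _
        exact FunctorToTypes.map_comp_apply F _ _ x.val }

/-- The functor `PSh(C₊) ⥤ G(PSh C)`. -/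
def psi : ((CPlus C)ᵒᵖ ⥤ Type v) ⥤ VGraph.{v} (Cᵒᵖ ⥤ Type v) where
  obj := psiObj
  map {F G} α :=
    { toFun := α.app (op o0)
      homMap := fun a b =>
        { app := fun c => TypeCat.ofHom fun x => ⟨α.app (op (oS c.unop)) x.val, by
            constructor
            · rw [← FunctorToTypes.naturality]
              exact congrArg _ x.2.1
            · rw [← FunctorToTypes.naturality]
              exact congrArg _ x.2.2⟩
          naturality := fun c c' g => by
            apply ConcreteCategory.hom_ext
            intro x
            apply Subtype.ext
            exact NatTrans.naturality_apply α _ x.val } }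
  map_id F := VGraphHom.ext' _ _ rfl (heq_of_eq (by
    funext a b
    apply NatTrans.ext
    funext c
    apply ConcreteCategory.hom_ext
    intro x
    apply Subtype.ext
    rfl))
  map_comp f g := VGraphHom.ext' _ _ rfl (heq_of_eq (by
    funext a b
    apply NatTrans.ext
    funext c
    apply ConcreteCategory.hom_ext
    intro x
    apply Subtype.ext
    rfl))

/-- The unit `X ⟶ ΨΦX`. -/
def unitHom (X : VGraph.{v} (Cᵒᵖ ⥤ Type v)) : X ⟶ psiObj (phiObj X) where
  toFun a := a
  homMap a b :=
    { app := fun c => TypeCat.ofHom fun x => ⟨⟨a, b, x⟩, rfl, rfl⟩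
      naturality := fun c c' g => by
        apply ConcreteCategory.hom_ext
        intro x
        apply Subtype.ext
        rfl }

/-- Transport along equality of endpoints. -/
def sigExtract {X : VGraph.{v} (Cᵒᵖ ⥤ Type v)} {c : C} {a b : X.objs}
    (p : objFun X (some c)) (h1 : p.1 = a) (h2 : p.2.1 = b) : (X.hom a b).obj (op c) :=
  cast (by rw [← h1, ← h2]) p.2.2

lemma sigExtract_mk {X : VGraph.{v} (Cᵒᵖ ⥤ Type v)} {c : C} {a b : X.objs}
    (u : (X.hom a b).obj (op c)) (h1 : (show objFun X (some c) from ⟨a, b, u⟩).1 = a)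
    (h2 : (show objFun X (some c) from ⟨a, b, u⟩).2.1 = b) :
    sigExtract (⟨a, b, u⟩ : objFun X (some c)) h1 h2 = u :=
  cast_eq _ u

/-- The inverse of the unit, `ΨΦX ⟶ X`. -/
def unitInv (X : VGraph.{v} (Cᵒᵖ ⥤ Type v)) : psiObj (phiObj X) ⟶ X where
  toFun a := a
  homMap a b :=
    { app := fun c => TypeCat.ofHom fun x => sigExtract x.val x.2.1 x.2.2
      naturality := fun c c' g => by
        apply ConcreteCategory.hom_ext
        intro x
        obtain ⟨⟨a', b', u⟩, h1, h2⟩ := x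
        have e1 : a' = a := h1
        subst e1
        have e2 : b' = b := h2
        subst e2
        show sigExtract (X := X)
            (⟨a', b', (X.hom a' b').map (Quiver.Hom.op g.unop) u⟩ : objFun X (some c'.unop)) rfl
              rfl
          = (X.hom a' b').map g (sigExtract (⟨a', b', u⟩ : objFun X (some c.unop)) h1 h2)
        rw [sigExtract_mk ((X.hom a' b').map (Quiver.Hom.op g.unop) u) rfl rfl,
          sigExtract_mk u h1 h2]
        rfl }

/-- The unit isomorphism. -/
def unitIso : 𝟭 (VGraph.{v} (Cᵒᵖ ⥤ Type v)) ≅ phi ⋙ psi :=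
  NatIso.ofComponents
    (fun X =>
      { hom := unitHom X
        inv := unitInv X
        hom_inv_id := VGraphHom.ext' _ _ rfl (heq_of_eq (by
          funext a b
          apply NatTrans.ext
          funext c
          apply ConcreteCategory.hom_ext
          intro x
          exact sigExtract_mk x rfl rfl))
        inv_hom_id := VGraphHom.ext' _ _ rfl (heq_of_eq (by
          funext a b
          apply NatTrans.ext
          funext c
          apply ConcreteCategory.hom_ext
          intro x
          obtain ⟨⟨a', b', u⟩, h1, h2⟩ := x
          have e1 : a' = a := h1
          subst e1
          have e2 : b' = b := h2
          subst e2
          apply Subtype.ext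
          show (⟨a', b', sigExtract (⟨a', b', u⟩ : objFun X (some c.unop)) h1 h2⟩ :
              objFun X (some c.unop)) = ⟨a', b', u⟩
          rw [sigExtract_mk u h1 h2])) })
    (fun {X Y} f => VGraphHom.ext' _ _ rfl (heq_of_eq (by
      funext a b
      apply NatTrans.ext
      funext c
      apply ConcreteCategory.hom_ext
      intro x
      apply Subtype.ext
      rfl)))

/-- Counit components. -/
def counitApp (F : (CPlus C)ᵒᵖ ⥤ Type v) :
    ∀ x : Option C, objFun (psiObj F) x → F.obj (op (x : CPlus C))
  | none => fun a => a
  | some _ => fun p => p.2.2.val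

/-- Inverse of counit components. -/
def counitInvApp (F : (CPlus C)ᵒᵖ ⥤ Type v) :
    ∀ x : Option C, F.obj (op (x : CPlus C)) → objFun (psiObj F) x
  | none => fun a => a
  | some c => fun u => ⟨F.map (sHom c).op u, F.map (tHom c).op u, ⟨u, rfl, rfl⟩⟩

/-- The counit isomorphism component at `F`. -/
def counitIsoApp (F : (CPlus C)ᵒᵖ ⥤ Type v) : phiObj (psiObj F) ≅ F :=
  NatIso.ofComponents
    (fun z =>
      { hom := TypeCat.ofHom (counitApp F z.unop)
        inv := TypeCat.ofHom (counitInvApp F z.unop)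
        hom_inv_id := by
          obtain ⟨(_ | c)⟩ := z
          · rfl
          · apply ConcreteCategory.hom_ext
            intro p
            obtain ⟨a, b, u, h1, h2⟩ := p
            subst h1
            subst h2
            rfl
        inv_hom_id := by
          obtain ⟨(_ | c)⟩ := z
          · rfl
          · rfl })
    (fun {z z'} g => by
      obtain ⟨z⟩ := z
      obtain ⟨z'⟩ := z'
      obtain ⟨g⟩ := g
      apply ConcreteCategory.hom_ext
      intro p
      change PlusHom (C := C) z' z at g
      cases g with
      | id0 => exact (FunctorToTypes.map_id_apply F p).symm
      | sigma c => exact p.2.2.2.1.symm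
      | tau c => exact p.2.2.2.2.symm
      | of f => rfl)

/-- The counit isomorphism. -/
def counitIso : psi ⋙ phi ≅ 𝟭 ((CPlus C)ᵒᵖ ⥤ Type v) :=
  NatIso.ofComponents counitIsoApp
    (fun {F G} α => by
      apply NatTrans.ext
      funext z
      obtain ⟨(_ | c)⟩ := z <;> rfl)

/-- The main equivalence `G(PSh C) ≌ PSh(C₊)`. -/
def mainEquiv (C : Type v) [SmallCategory C] :
    VGraph.{v} (Cᵒᵖ ⥤ Type v) ≌ ((CPlus C)ᵒᵖ ⥤ Type v) :=
  CategoryTheory.Equivalence.mk phi psi unitIso counitIso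

end Main

section Congr

universe w' u'

variable {V' : Type u} [Category.{v} V'] {W' : Type u'} [Category.{w} W']

/-- `VGraph` is functorial. -/
def mapVGraph (E : V' ⥤ W') : VGraph.{w'} V' ⥤ VGraph.{w'} W' where
  obj X := ⟨X.objs, fun a b => E.obj (X.hom a b)⟩
  map f := ⟨f.toFun, fun a b => E.map (f.homMap a b)⟩
  map_id X := VGraphHom.ext' _ _ rfl (heq_of_eq (by
    funext a b
    exact E.map_id _))
  map_comp f g := VGraphHom.ext' _ _ rfl (heq_of_eq (by
    funext a b
    exact E.map_comp _ _))

/-- `VGraph` preserves equivalences. -/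
def equivVGraph (E : V' ≌ W') : VGraph.{w'} V' ≌ VGraph.{w'} W' :=
  CategoryTheory.Equivalence.mk (mapVGraph E.functor) (mapVGraph E.inverse)
    (NatIso.ofComponents
      (fun X =>
        { hom := ⟨fun a => a, fun a b => E.unit.app (X.hom a b)⟩
          inv := ⟨fun a => a, fun a b => E.unitInv.app (X.hom a b)⟩
          hom_inv_id := VGraphHom.ext' _ _ rfl (heq_of_eq (by
            funext a b
            show E.unit.app (X.hom a b) ≫ E.unitInv.app (X.hom a b) = 𝟙 (X.hom a b)
            exact NatTrans.congr_app E.unitIso.hom_inv_id (X.hom a b)))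
          inv_hom_id := VGraphHom.ext' _ _ rfl (heq_of_eq (by
            funext a b
            show E.unitInv.app (X.hom a b) ≫ E.unit.app (X.hom a b) = 𝟙 _
            exact NatTrans.congr_app E.unitIso.inv_hom_id (X.hom a b))) })
      (fun {X Y} f => VGraphHom.ext' _ _ rfl (heq_of_eq (by
        funext a b
        exact E.unit.naturality _))))
    (NatIso.ofComponents
      (fun X =>
        { hom := ⟨fun a => a, fun a b => E.counit.app (X.hom a b)⟩
          inv := ⟨fun a => a, fun a b => E.counitInv.app (X.hom a b)⟩
          hom_inv_id := VGraphHom.ext' _ _ rfl (heq_of_eq (by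
            funext a b
            show E.counit.app (X.hom a b) ≫ E.counitInv.app (X.hom a b) = 𝟙 _
            exact NatTrans.congr_app E.counitIso.hom_inv_id (X.hom a b)))
          inv_hom_id := VGraphHom.ext' _ _ rfl (heq_of_eq (by
            funext a b
            show E.counitInv.app (X.hom a b) ≫ E.counit.app (X.hom a b) = 𝟙 _
            exact NatTrans.congr_app E.counitIso.inv_hom_id (X.hom a b))) })
      (fun {X Y} f => VGraphHom.ext' _ _ rfl (heq_of_eq (by
        funext a b
        exact E.counit.naturality _))))

end Congr

/-- For a small category `C`, the category of graphs enriched in presheaves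
on `C` is equivalent to the category of presheaves on `C₊`; consequently if `V` is a presheaf
topos then so is `GV`. -/
theorem stmt8 (C : Type v) [SmallCategory C] :
    Nonempty (VGraph.{v} (Cᵒᵖ ⥤ Type v) ≌ ((CPlus C)ᵒᵖ ⥤ Type v)) ∧
      (∀ (V : Type u) [Category.{v} V] (D : Type v) [SmallCategory D],
        (V ≌ (Dᵒᵖ ⥤ Type v)) → Nonempty (VGraph.{v} V ≌ ((CPlus D)ᵒᵖ ⥤ Type v))) := by
  refine ⟨⟨mainEquiv C⟩, ?_⟩
  intro V _ D _ E
  exact ⟨(equivVGraph E).trans (mainEquiv D)⟩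

end Paper
end

section
/- Let F : A → B be a local left adjoint, where A is cocomplete and has a set C of connected components each possessing an initial object, and B is locally small. Then for any functor G : A → D into a category D with coproducts, the left Kan extension L of G along F exists and is given by L(b) = ∐_{c ∈ C} ∐_{f : F(0_c) → b} G(a_f), where 0_c is the initial object of component c and F(0_c) → F(a_f) → b is a chosen cogeneric factorization of f. -/
open CategoryTheory CategoryTheory.Limits

universe v₁ v₂ v₃ u₁ u₂ u₃

namespace Paper

/-- A functor is a local left adjoint when all the induced functors between coslices are
left adjoints. -/
def IsLocalLeftAdjoint {A : Type u₁} [Category.{v₁} A] {B : Type u₂} [Category.{v₂} B]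
    (F : A ⥤ B) : Prop :=
  ∀ a : A, (Under.post F (X := a)).IsLeftAdjoint

/-- A map `g : F a ⟶ b` is cogeneric when, as an object of the comma category `F/b`, it is
terminal in its connected component. -/
def IsCogenericObj {A : Type u₁} [Category.{v₁} A] {B : Type u₂} [Category.{v₂} B]
    {F : A ⥤ B} {b : B} (g : CostructuredArrow F b) : Prop :=
  Nonempty (IsTerminal (⟨g, rfl⟩ : ConnectedComponents.Component (Quotient.mk'' g)))

section Aux

variable {A : Type u₁} [Category.{v₁} A] {B : Type u₂} [Category.{v₂} B]
    {D : Type u₃} [Category.{v₃} D]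
    (F : A ⥤ B) (G : A ⥤ D)
    [HasCoproducts.{max u₁ v₂} D]
    (O : ConnectedComponents A → A)
    (hO : ∀ c : ConnectedComponents A, ∃ h : Quotient.mk'' (O c) = c,
      Nonempty (IsInitial (⟨O c, h⟩ : ConnectedComponents.Component c)))
    (fact : ∀ (b : B) (c : ConnectedComponents A) (f : F.obj (O c) ⟶ b),
      Σ' (a : A) (h : O c ⟶ a) (g : F.obj a ⟶ b),
        F.map h ≫ g = f ∧ IsCogenericObj (CostructuredArrow.mk g))
    (b : B)

/-- The chosen initial object of the component `c`, as an object of `Component c`. -/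
noncomputable def initObj (c : ConnectedComponents A) : ConnectedComponents.Component c :=
  ⟨O c, (hO c).choose⟩

/-- The chosen initial object is initial. -/
noncomputable def isInit (c : ConnectedComponents A) : IsInitial (initObj O hO c) :=
  (hO c).choose_spec.some

variable {F} in
/-- Abbreviation for the cogeneric factorization data. -/
abbrev aP (p : Σ c : ConnectedComponents A, F.obj (O c) ⟶ b) : A := (fact b p.1 p.2).1

variable {F} in
abbrev hP (p : Σ c : ConnectedComponents A, F.obj (O c) ⟶ b) : O p.1 ⟶ aP O fact b p :=
  (fact b p.1 p.2).2.1

variable {F} in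
abbrev gP (p : Σ c : ConnectedComponents A, F.obj (O c) ⟶ b) :
    F.obj (aP O fact b p) ⟶ b :=
  (fact b p.1 p.2).2.2.1

variable {F} in
lemma wP (p : Σ c : ConnectedComponents A, F.obj (O c) ⟶ b) :
    F.map (hP O fact b p) ≫ gP O fact b p = p.2 :=
  (fact b p.1 p.2).2.2.2.1

variable {F} in
/-- The chosen cogeneric (terminal) object associated to `p`. -/
abbrev TT (p : Σ c : ConnectedComponents A, F.obj (O c) ⟶ b) : CostructuredArrow F b :=
  CostructuredArrow.mk (gP O fact b p)

variable {F} in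
noncomputable def termP (p : Σ c : ConnectedComponents A, F.obj (O c) ⟶ b) :
    IsTerminal (⟨TT O fact b p, rfl⟩ : ConnectedComponents.Component (Quotient.mk'' (TT O fact b p))) :=
  (fact b p.1 p.2).2.2.2.2.some

variable {F} in
/-- The connected component of the domain of `x`. -/
abbrev cX (x : CostructuredArrow F b) : ConnectedComponents A := Quotient.mk'' x.left

variable {F} in
/-- The canonical map from the initial object of the component of `x.left`. -/
noncomputable def iotaX (x : CostructuredArrow F b) : O (cX b x) ⟶ x.left :=
  ((isInit O hO (cX b x)).to ⟨x.left, rfl⟩).hom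

variable {F} in
noncomputable def fX (x : CostructuredArrow F b) : F.obj (O (cX b x)) ⟶ b :=
  F.map (iotaX O hO b x) ≫ x.hom

variable {F} in
noncomputable def pX (x : CostructuredArrow F b) :
    Σ c : ConnectedComponents A, F.obj (O c) ⟶ b :=
  ⟨cX b x, fX O hO b x⟩

variable {F} in
lemma sigma_hom_eq {c c' : ConnectedComponents A} (e : c = c')
    (u : F.obj (O c) ⟶ b) (u' : F.obj (O c') ⟶ b)
    (h : u = eqToHom (by rw [e]) ≫ u') :
    (⟨c, u⟩ : Σ k : ConnectedComponents A, F.obj (O k) ⟶ b) = ⟨c', u'⟩ := by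
  subst e
  simp only [eqToHom_refl, Category.id_comp] at h
  subst h
  rfl

variable {F} in
lemma memX (x : CostructuredArrow F b) :
    (Quotient.mk'' x : ConnectedComponents (CostructuredArrow F b)) =
      Quotient.mk'' (TT O fact b (pX O hO b x)) := by
  have u : CostructuredArrow.mk (fX O hO b x) ⟶ x :=
    CostructuredArrow.homMk (iotaX O hO b x) rfl
  have v : CostructuredArrow.mk (fX O hO b x) ⟶ TT O fact b (pX O hO b x) :=
    CostructuredArrow.homMk (hP O fact b (pX O hO b x)) (wP O fact b (pX O hO b x))
  exact Quotient.sound' (Zigzag.of_inv_hom u v)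

variable {F} in
/-- The component map of the colimit cocone, abstractly. -/
noncomputable def kap' (p : Σ c : ConnectedComponents A, F.obj (O c) ⟶ b)
    (z : ConnectedComponents.Component (Quotient.mk'' (TT O fact b p))) :
    G.obj z.obj.left ⟶ ∐ (fun q : Σ c : ConnectedComponents A, F.obj (O c) ⟶ b =>
      G.obj (aP O fact b q)) :=
  G.map (CommaMorphism.left ((termP O fact b p).from z).hom) ≫
    Sigma.ι (fun q => G.obj (aP O fact b q)) p

variable {F} in
lemma kap'_congr {p q : Σ c : ConnectedComponents A, F.obj (O c) ⟶ b} (h : p = q)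
    (z : ConnectedComponents.Component (Quotient.mk'' (TT O fact b p))) :
    kap' G O fact b p z = kap' G O fact b q ⟨z.obj, h ▸ z.property⟩ := by
  subst h; rfl

variable {F} in
noncomputable def kap (x : CostructuredArrow F b) :
    G.obj x.left ⟶ ∐ (fun q : Σ c : ConnectedComponents A, F.obj (O c) ⟶ b =>
      G.obj (aP O fact b q)) :=
  kap' G O fact b (pX O hO b x) ⟨x, memX O hO fact b x⟩

variable {F} in
lemma pX_hom {x y : CostructuredArrow F b} (m : x ⟶ y) :
    pX O hO b x = pX O hO b y := by
  have e : cX b x = cX b y := Quotient.sound' (Zigzag.of_hom m.left)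
  refine sigma_hom_eq O b e _ _ ?_
  have hi : iotaX O hO b x ≫ m.left =
      eqToHom (show O (cX b x) = O (cX b y) by rw [e]) ≫ iotaX O hO b y :=
    congrArg InducedCategory.Hom.hom ((isInit O hO (cX b x)).hom_ext
      (Y := (⟨y.left, e.symm⟩ : ConnectedComponents.Component (cX b x)))
      ⟨iotaX O hO b x ≫ m.left⟩ ⟨eqToHom (show O (cX b x) = O (cX b y) by rw [e]) ≫ iotaX O hO b y⟩)
  rw [fX, fX, ← CostructuredArrow.w m, ← Category.assoc, ← F.map_comp, hi,
    F.map_comp, eqToHom_map, Category.assoc]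

variable {F} in
lemma pX_T (p : Σ c : ConnectedComponents A, F.obj (O c) ⟶ b) :
    pX O hO b (TT O fact b p) = p := by
  have e : cX b (TT O fact b p) = p.1 :=
    (Quotient.sound' (Zigzag.of_hom (hP O fact b p))).symm.trans (hO p.1).choose
  refine sigma_hom_eq O b e _ _ ?_
  have hi : iotaX O hO b (TT O fact b p) =
      eqToHom (show O (cX b (TT O fact b p)) = O p.1 by rw [e]) ≫ hP O fact b p :=
    congrArg InducedCategory.Hom.hom ((isInit O hO (cX b (TT O fact b p))).hom_ext
      (Y := (⟨aP O fact b p, rfl⟩ : ConnectedComponents.Component (cX b (TT O fact b p))))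
      ⟨iotaX O hO b (TT O fact b p)⟩
      ⟨eqToHom (show O (cX b (TT O fact b p)) = O p.1 by rw [e]) ≫ hP O fact b p⟩)
  have : fX O hO b (TT O fact b p) = F.map (iotaX O hO b (TT O fact b p)) ≫ gP O fact b p := rfl
  rw [this, hi, F.map_comp, eqToHom_map, Category.assoc, wP]

variable {F} in
lemma nat {x y : CostructuredArrow F b} (m : x ⟶ y) :
    G.map m.left ≫ kap G O hO fact b y = kap G O hO fact b x := by
  have hx : (Quotient.mk'' x : ConnectedComponents (CostructuredArrow F b)) =
      Quotient.mk'' (TT O fact b (pX O hO b y)) :=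
    pX_hom O hO b m ▸ memX O hO fact b x
  have h5 : kap G O hO fact b x =
      G.map (CommaMorphism.left ((termP O fact b (pX O hO b y)).from ⟨x, hx⟩).hom) ≫
        Sigma.ι (fun q => G.obj (aP O fact b q)) (pX O hO b y) :=
    kap'_congr G O fact b (pX_hom O hO b m) ⟨x, memX O hO fact b x⟩
  let mm : (⟨x, hx⟩ : ConnectedComponents.Component (Quotient.mk'' (TT O fact b (pX O hO b y)))) ⟶
      ⟨y, memX O hO fact b y⟩ := ⟨m⟩
  have h2 : (termP O fact b (pX O hO b y)).from ⟨x, hx⟩ =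
      mm ≫ (termP O fact b (pX O hO b y)).from ⟨y, memX O hO fact b y⟩ :=
    (termP O fact b (pX O hO b y)).hom_ext _ _
  rw [h5, h2]
  show G.map m.left ≫ kap G O hO fact b y =
    G.map (m.left ≫
      CommaMorphism.left ((termP O fact b (pX O hO b y)).from ⟨y, memX O hO fact b y⟩).hom) ≫
      Sigma.ι (fun q => G.obj (aP O fact b q)) (pX O hO b y)
  rw [G.map_comp, Category.assoc]
  rfl

variable {F} in
lemma kap_T (p : Σ c : ConnectedComponents A, F.obj (O c) ⟶ b) :
    kap G O hO fact b (TT O fact b p) = Sigma.ι (fun q => G.obj (aP O fact b q)) p := by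
  have hx : (Quotient.mk'' (TT O fact b p) : ConnectedComponents (CostructuredArrow F b)) =
      Quotient.mk'' (TT O fact b p) := rfl
  have h5 : kap G O hO fact b (TT O fact b p) =
      G.map (CommaMorphism.left ((termP O fact b p).from ⟨TT O fact b p, hx⟩).hom) ≫
        Sigma.ι (fun q => G.obj (aP O fact b q)) p :=
    kap'_congr G O fact b (pX_T O hO fact b p) ⟨TT O fact b p, memX O hO fact b (TT O fact b p)⟩
  have h2 : (termP O fact b p).from ⟨TT O fact b p, hx⟩ =
      𝟙 (⟨TT O fact b p, rfl⟩ : ConnectedComponents.Component (Quotient.mk'' (TT O fact b p))) :=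
    (termP O fact b p).hom_ext _ _
  rw [h5, h2]
  show G.map (𝟙 ((TT O fact b p).left)) ≫ _ = _
  rw [G.map_id, Category.id_comp]

variable {F} in
/-- The claimed colimit cocone. -/
noncomputable def myCocone : Cocone (CostructuredArrow.proj F b ⋙ G) where
  pt := ∐ (fun q : Σ c : ConnectedComponents A, F.obj (O c) ⟶ b => G.obj (aP O fact b q))
  ι :=
    { app := fun x => kap G O hO fact b x
      naturality := fun x y m => by exact (nat G O hO fact b m).trans (Category.comp_id _).symm }

variable {F} in
/-- The cocone is a colimit. -/
noncomputable def myIsColimit : IsColimit (myCocone G O hO fact b) where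
  desc s := Sigma.desc fun p => s.ι.app (TT O fact b p)
  fac s x := by
    show kap G O hO fact b x ≫ _ = _
    unfold kap kap'
    rw [Category.assoc]
    erw [Sigma.ι_desc]
    exact s.w (show x ⟶ TT O fact b (pX O hO b x) from
      ((termP O fact b (pX O hO b x)).from ⟨x, memX O hO fact b x⟩).hom)
  uniq s m hm := by
    apply Sigma.hom_ext
    intro p
    erw [Sigma.ι_desc]
    rw [← kap_T G O hO fact b p]
    exact hm (TT O fact b p)

end Aux

/-- Let `F : A ⥤ B` be a local left adjoint, where `A` is cocomplete and
each connected component of `A` has an initial object, and `B` is locally small. Then for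
any `G : A ⥤ D` with `D` having coproducts, the left Kan extension `L` of `G` along `F`
exists and is given by the formula
`L b = ∐_{c} ∐_{f : F 0_c ⟶ b} G (a_f)`,
where `0_c` is the initial object of the component `c` and
`F 0_c ⟶ F (a_f) ⟶ b` is a chosen cogeneric factorisation of `f`. -/
theorem stmt13 {A : Type u₁} [Category.{v₁} A] {B : Type u₂} [Category.{v₂} B]
    {D : Type u₃} [Category.{v₃} D]
    (F : A ⥤ B) (G : A ⥤ D)
    [HasColimits A] [HasCoproducts.{max u₁ v₂} D]
    (hF : IsLocalLeftAdjoint F)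
    (O : ConnectedComponents A → A)
    (hO : ∀ c : ConnectedComponents A, ∃ h : Quotient.mk'' (O c) = c,
      Nonempty (IsInitial (⟨O c, h⟩ : ConnectedComponents.Component c)))
    (fact : ∀ (b : B) (c : ConnectedComponents A) (f : F.obj (O c) ⟶ b),
      Σ' (a : A) (h : O c ⟶ a) (g : F.obj a ⟶ b),
        F.map h ≫ g = f ∧ IsCogenericObj (CostructuredArrow.mk g)) :
    ∃ hkan : F.HasLeftKanExtension G,
      ∀ b : B,
        letI : F.HasLeftKanExtension G := hkan
        Nonempty ((F.leftKanExtension G).obj b ≅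
          ∐ (fun p : Σ c : ConnectedComponents A, F.obj (O c) ⟶ b =>
            G.obj (fact b p.1 p.2).1)) := by
  haveI hpw : F.HasPointwiseLeftKanExtension G :=
    fun b => HasColimit.mk ⟨myCocone G O hO fact b, myIsColimit G O hO fact b⟩
  refine ⟨inferInstance, fun b => ?_⟩
  exact ⟨IsColimit.coconePointUniqueUpToIso
    (Functor.isPointwiseLeftKanExtensionOfIsLeftKanExtension
      (F.leftKanExtension G) (F.leftKanExtensionUnit G) b)
    (myIsColimit G O hO fact b)⟩

end Paper
end

section
/- Let F : V₁ × … × Vₙ → W be a functor. If F preserves reflexive coequalisers in each variable separately, then F preserves reflexive coequalisers. -/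
open CategoryTheory CategoryTheory.Limits

universe w v u

namespace Paper

/-- A functor preserves reflexive coequalisers when it preserves coequalisers of all
reflexive pairs. -/
def PreservesReflexiveCoequalizers {C : Type u} [Category.{v} C] {D : Type u} [Category.{w} D]
    (F : C ⥤ D) : Prop :=
  ∀ {A B : C} (f g : A ⟶ B), IsReflexivePair f g →
    Nonempty (PreservesColimit (parallelPair f g) F)

variable {n : ℕ} {V : Fin n → Type u} [∀ i, Category.{v} (V i)]

/-- The functor `V i ⥤ ∏_j V j` fixing the components other than `i` at the objects `X j`. -/
def insertFunctor (X : ∀ j, V j) (i : Fin n) : V i ⥤ (∀ j, V j) where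
  obj Y := Function.update X i Y
  map {Y Y'} f := fun j =>
    if h : j = i then by
      subst h
      exact eqToHom (by simp) ≫ f ≫ eqToHom (by simp)
    else
      eqToHom (show Function.update X i Y j = Function.update X i Y' j by
        rw [Function.update_of_ne h, Function.update_of_ne h])
  map_id Y := by
    funext j
    dsimp
    by_cases h : j = i
    · subst h
      rw [dif_pos rfl]
      simp
    · rw [dif_neg h]
  map_comp {Y₁ Y₂ Y₃} f g := by
    funext j
    dsimp
    by_cases h : j = i
    · subst h
      rw [dif_pos rfl, dif_pos rfl, dif_pos rfl]
      simp
    · rw [dif_neg h, dif_neg h, dif_neg h]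
      simp

@[simp] lemma insertFunctor_obj (X : ∀ j, V j) (i : Fin n) (Y : V i) :
    (insertFunctor X i).obj Y = Function.update X i Y := rfl

lemma pi_eqToHom_apply {P Q : ∀ j, V j} (H : P = Q) (j : Fin n) :
    (eqToHom H : P ⟶ Q) j = eqToHom (congrFun H j) := by subst H; rfl

lemma pi_comp_apply {P Q R : ∀ j, V j} (u : P ⟶ Q) (v : Q ⟶ R) (j : Fin n) :
    (u ≫ v) j = u j ≫ v j := rfl

lemma pi_hom_ext {P Q : ∀ j, V j} {u v : P ⟶ Q} (h : ∀ j, u j = v j) : u = v := funext h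

lemma insertFunctor_map_self (X : ∀ j, V j) (i : Fin n) {Y Y' : V i} (φ : Y ⟶ Y') :
    ((insertFunctor X i).map φ) i =
      eqToHom (Function.update_self i Y X) ≫ φ ≫ eqToHom (Function.update_self i Y' X).symm := by
  show (if h : i = i then _ else _) = _
  exact dif_pos rfl

lemma insertFunctor_map_ne (X : ∀ j, V j) (i : Fin n) {Y Y' : V i} (φ : Y ⟶ Y') {j : Fin n}
    (hj : j ≠ i) :
    ((insertFunctor X i).map φ) j = eqToHom (show Function.update X i Y j = Function.update X i Y' j by
      rw [Function.update_of_ne hj, Function.update_of_ne hj]) := by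
  show (if h : j = i then _ else _) = _
  exact dif_neg hj

def diteHom {Y Z : ∀ j, V j} (i : Fin n) (φ : Y i ⟶ Z i)
    (ψ : ∀ j, j ≠ i → (Y j ⟶ Z j)) : Y ⟶ Z := fun j =>
  if hj : j = i then by subst hj; exact φ else ψ j hj

@[simp] lemma diteHom_self {Y Z : ∀ j, V j} (i : Fin n) (φ : Y i ⟶ Z i)
    (ψ : ∀ j, j ≠ i → (Y j ⟶ Z j)) : diteHom i φ ψ i = φ := by
  show (if hj : i = i then _ else _) = φ
  rw [dif_pos rfl]

lemma diteHom_ne {Y Z : ∀ j, V j} (i : Fin n) (φ : Y i ⟶ Z i)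
    (ψ : ∀ j, j ≠ i → (Y j ⟶ Z j)) {j : Fin n} (hj : j ≠ i) : diteHom i φ ψ j = ψ j hj := by
  show (if hj : j = i then _ else _) = _
  rw [dif_neg hj]

def eval_isColimit {A B : ∀ j, V j} {f g : A ⟶ B} {c : Cocone (parallelPair f g)}
    (hc : IsColimit c) (i : Fin n)
    (w : f i ≫ c.ι.app WalkingParallelPair.one i = g i ≫ c.ι.app WalkingParallelPair.one i) :
    IsColimit (Cofork.ofπ (c.ι.app WalkingParallelPair.one i) w) := by
  have hfq : ∀ j, f j ≫ c.ι.app WalkingParallelPair.one j = g j ≫ c.ι.app WalkingParallelPair.one j := by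
    intro j
    exact congrFun ((c.w WalkingParallelPairHom.left).trans (c.w WalkingParallelPairHom.right).symm) j
  refine Cofork.IsColimit.mk' _ fun s => ?_
  let τ : B ⟶ Function.update c.pt i s.pt :=
    diteHom i (s.π ≫ eqToHom (Function.update_self i s.pt c.pt).symm)
      (fun j hj => c.ι.app WalkingParallelPair.one j ≫ eqToHom (Function.update_of_ne hj s.pt c.pt).symm)
  have hτw : f ≫ τ = g ≫ τ := by
    apply pi_hom_ext
    intro j
    rw [pi_comp_apply, pi_comp_apply]
    by_cases hj : j = i
    · subst hj
      simp only [τ, diteHom_self]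
      rw [← Category.assoc, ← Category.assoc, s.condition]
    · simp only [τ, diteHom_ne _ _ _ hj]
      rw [← Category.assoc, ← Category.assoc, hfq j]
  let cf : Cofork f g := Cofork.ofπ τ hτw
  let d := hc.desc cf
  have hd : c.ι.app WalkingParallelPair.one ≫ d = τ := hc.fac cf WalkingParallelPair.one
  refine ⟨d i ≫ eqToHom (Function.update_self i s.pt c.pt), ?_, ?_⟩
  · have h1 := congrFun hd i
    rw [pi_comp_apply] at h1
    simp only [τ, diteHom_self] at h1
    rw [Cofork.π_ofπ, ← Category.assoc, h1]
    simp
  · intro m hm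
    -- build a cocone morphism and use uniqueness of desc
    let mbar : c.pt ⟶ Function.update c.pt i s.pt :=
      diteHom i (m ≫ eqToHom (Function.update_self i s.pt c.pt).symm)
        (fun j hj => eqToHom (Function.update_of_ne hj s.pt c.pt).symm)
    rw [Cofork.π_ofπ] at hm
    have hone : mbar = d → c.ι.app WalkingParallelPair.one ≫ mbar = τ → True := fun _ _ => trivial
    have honeeq : c.ι.app WalkingParallelPair.one ≫ mbar = τ := by
      apply pi_hom_ext
      intro j
      rw [pi_comp_apply]
      by_cases hj : j = i
      · subst hj
        simp only [mbar, τ, diteHom_self]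
        rw [← Category.assoc, hm]
      · simp only [mbar, τ, diteHom_ne _ _ _ hj]
    have hmbar : mbar = d := by
      refine (hc.uniq cf mbar ?_).trans rfl
      intro t
      cases t with
      | one =>
        have : cf.ι.app WalkingParallelPair.one = τ := rfl
        rw [this]
        exact honeeq
      | zero =>
        have hz : c.ι.app WalkingParallelPair.zero = f ≫ c.ι.app WalkingParallelPair.one :=
          (c.w WalkingParallelPairHom.left).symm
        have hz' : cf.ι.app WalkingParallelPair.zero = f ≫ τ := rfl
        rw [hz, hz', Category.assoc, honeeq]
    have := congrFun hmbar i
    simp only [mbar, diteHom_self] at this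
    rw [← this]
    simp

lemma epi_aux {W : Type u} [Category.{v} W] (F : (∀ j, V j) ⥤ W)
    (hF : ∀ (i : Fin n) (X : ∀ j, V j), PreservesReflexiveCoequalizers (insertFunctor X i ⋙ F))
    {A B : ∀ j, V j} {f g : A ⟶ B} (hfg : IsReflexivePair f g)
    {c : Cocone (parallelPair f g)} (hc : IsColimit c)
    (k : ℕ) {Y Z : ∀ j, V j} (u : Y ⟶ Z)
    (h1 : ∀ j : Fin n, (j : ℕ) < k → ∃ (p : Y j = B j) (p' : c.pt j = Z j),
      u j = eqToHom p ≫ c.ι.app WalkingParallelPair.one j ≫ eqToHom p')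
    (h2 : ∀ j : Fin n, k ≤ (j : ℕ) → ∃ p : Y j = Z j, u j = eqToHom p) :
    Epi (F.map u) := by
  have hfq : ∀ j, f j ≫ c.ι.app WalkingParallelPair.one j
      = g j ≫ c.ι.app WalkingParallelPair.one j := fun j =>
    congrFun ((c.w WalkingParallelPairHom.left).trans (c.w WalkingParallelPairHom.right).symm) j
  induction k generalizing Y Z u with
  | zero =>
    have HA : Y = Z := funext fun j => (h2 j (Nat.zero_le _)).choose
    have hu : u = eqToHom HA := by
      apply pi_hom_ext; intro j
      rw [pi_eqToHom_apply]
      exact (h2 j (Nat.zero_le _)).choose_spec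
    rw [hu]
    infer_instance
  | succ k IH =>
    by_cases hk : k < n
    · set i : Fin n := ⟨k, hk⟩ with hidef
      obtain ⟨pY, pZ, hui⟩ := h1 i (Nat.lt_succ_self k)
      have hrefl : IsReflexivePair (f i) (g i) := by
        obtain ⟨sc, hs1, hs2⟩ := hfg.common_section'
        exact IsReflexivePair.mk' (sc i) (congrFun hs1 i) (congrFun hs2 i)
      obtain ⟨pc⟩ := hF i Y (f i) (g i) hrefl
      obtain ⟨hGq⟩ := pc.preserves (eval_isColimit hc i (hfq i))
      have hepiGq : Epi ((insertFunctor Y i ⋙ F).map (c.ι.app WalkingParallelPair.one i)) := by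
        constructor
        intro T a b hab
        apply hGq.hom_ext
        rintro (_ | _)
        · simp only [Functor.mapCocone_ι_app]
          have h0 : (Cofork.ofπ (c.ι.app WalkingParallelPair.one i) (hfq i)).ι.app
              WalkingParallelPair.zero = f i ≫ c.ι.app WalkingParallelPair.one i := rfl
          rw [h0, Functor.map_comp, Category.assoc, Category.assoc, hab]
        · simp only [Functor.mapCocone_ι_app]
          have h0 : (Cofork.ofπ (c.ι.app WalkingParallelPair.one i) (hfq i)).ι.app
              WalkingParallelPair.one = c.ι.app WalkingParallelPair.one i := rfl
          rw [h0, hab]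
      let u₁ : Y ⟶ Function.update Y i (c.pt i) :=
        eqToHom (Function.update_eq_self i Y).symm ≫
          (insertFunctor Y i).map (eqToHom pY ≫ c.ι.app WalkingParallelPair.one i)
      let u₂ : Function.update Y i (c.pt i) ⟶ Z :=
        diteHom i (eqToHom ((Function.update_self i (c.pt i) Y).trans pZ))
          (fun j hj => eqToHom (Function.update_of_ne hj (c.pt i) Y) ≫ u j)
      have hu : u = u₁ ≫ u₂ := by
        apply pi_hom_ext; intro j
        rw [pi_comp_apply]
        by_cases hj : j = i
        · subst hj
          rw [hui]
          simp only [u₁, u₂, pi_comp_apply, pi_eqToHom_apply, diteHom_self,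
            insertFunctor_map_self]
          erw [pi_comp_apply, insertFunctor_map_self, pi_eqToHom_apply]
          simp
        · simp only [u₁, u₂, pi_comp_apply, pi_eqToHom_apply, diteHom_ne _ _ _ hj,
            insertFunctor_map_ne _ _ _ hj]
          erw [pi_comp_apply, insertFunctor_map_ne _ _ _ hj, pi_eqToHom_apply]
          simp
      have e1 : Epi (F.map u₁) := by
        have : F.map u₁ = eqToHom (congrArg F.obj (Function.update_eq_self i Y).symm) ≫
            (insertFunctor Y i ⋙ F).map (eqToHom pY) ≫
            (insertFunctor Y i ⋙ F).map (c.ι.app WalkingParallelPair.one i) := by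
          simp only [u₁, Functor.map_comp, Functor.comp_map, eqToHom_map]
          erw [Functor.map_comp, Functor.map_comp, eqToHom_map, eqToHom_map]
          rfl
        rw [this]
        haveI := hepiGq
        exact @epi_comp _ _ _ _ _ _ inferInstance _ (@epi_comp _ _ _ _ _ _ (@IsIso.epi_of_iso _ _ _ _ _ (Functor.map_isIso _ (eqToHom pY))) _ hepiGq)
      have e2 : Epi (F.map u₂) := by
        apply IH u₂
        · intro j hj
          have hj' : j ≠ i := by
            intro hcon; rw [hcon] at hj; exact absurd hj (by simp [hidef])
          obtain ⟨p, p', hu'⟩ := h1 j (Nat.lt_succ_of_lt hj)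
          refine ⟨(Function.update_of_ne hj' (c.pt i) Y).trans p, p', ?_⟩
          simp only [u₂]
          rw [diteHom_ne _ _ _ hj', hu']
          simp
        · intro j hj
          by_cases hj' : j = i
          · subst hj'
            refine ⟨(Function.update_self i (c.pt i) Y).trans pZ, ?_⟩
            simp only [u₂]
            exact diteHom_self _ _ _
          · have hk1 : k + 1 ≤ (j : ℕ) := by
              rcases Nat.lt_or_ge (j : ℕ) (k+1) with h | h
              · exfalso
                have : (j : ℕ) = k := Nat.le_antisymm (Nat.lt_succ_iff.mp h) hj
                exact hj' (Fin.ext this)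
              · exact h
            obtain ⟨p, hp⟩ := h2 j hk1
            refine ⟨(Function.update_of_ne hj' (c.pt i) Y).trans p, ?_⟩
            simp only [u₂]
            rw [diteHom_ne _ _ _ hj', hp]
            simp
      rw [hu, Functor.map_comp]
      exact epi_comp _ _
    · apply IH u
      · intro j hj; exact h1 j (Nat.lt_succ_of_lt hj)
      · intro j hj; exact absurd j.isLt (by omega)

lemma desc_aux {W : Type u} [Category.{v} W] (F : (∀ j, V j) ⥤ W)
    (hF : ∀ (i : Fin n) (X : ∀ j, V j), PreservesReflexiveCoequalizers (insertFunctor X i ⋙ F))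
    {A B : ∀ j, V j} {f g : A ⟶ B} (hfg : IsReflexivePair f g)
    {c : Cocone (parallelPair f g)} (hc : IsColimit c)
    {X : W} (h₀ : F.obj B ⟶ X) (hcomp : F.map f ≫ h₀ = F.map g ≫ h₀)
    (k : ℕ) {Z : ∀ j, V j} (u : B ⟶ Z)
    (h1 : ∀ j : Fin n, (j : ℕ) < k → ∃ p' : c.pt j = Z j,
      u j = c.ι.app WalkingParallelPair.one j ≫ eqToHom p')
    (h2 : ∀ j : Fin n, k ≤ (j : ℕ) → ∃ p : B j = Z j, u j = eqToHom p) :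
    ∃ l : F.obj Z ⟶ X, F.map u ≫ l = h₀ := by
  obtain ⟨sct, hs1, hs2⟩ := hfg.common_section'
  have hfq : ∀ j, f j ≫ c.ι.app WalkingParallelPair.one j
      = g j ≫ c.ι.app WalkingParallelPair.one j := fun j =>
    congrFun ((c.w WalkingParallelPairHom.left).trans (c.w WalkingParallelPairHom.right).symm) j
  induction k generalizing Z u with
  | zero =>
    have HA : B = Z := funext fun j => (h2 j (Nat.zero_le _)).choose
    have hu : u = eqToHom HA := by
      apply pi_hom_ext; intro j
      rw [pi_eqToHom_apply]
      exact (h2 j (Nat.zero_le _)).choose_spec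
    refine ⟨eqToHom (congrArg F.obj HA).symm ≫ h₀, ?_⟩
    rw [hu, eqToHom_map]
    simp
  | succ k IH =>
    by_cases hk : k < n
    · set i : Fin n := ⟨k, hk⟩ with hidef
      obtain ⟨pZ, hui⟩ := h1 i (Nat.lt_succ_self k)
      let Z' := Function.update Z i (B i)
      let u' : B ⟶ Z' := diteHom i (eqToHom (Function.update_self i (B i) Z).symm)
        (fun j hj => u j ≫ eqToHom (Function.update_of_ne hj (B i) Z).symm)
      have h1' : ∀ j : Fin n, (j : ℕ) < k → ∃ p' : c.pt j = Z' j,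
          u' j = c.ι.app WalkingParallelPair.one j ≫ eqToHom p' := by
        intro j hj
        have hj' : j ≠ i := by intro hcon; rw [hcon] at hj; exact absurd hj (by simp [hidef])
        obtain ⟨p', hp'⟩ := h1 j (Nat.lt_succ_of_lt hj)
        refine ⟨p'.trans (Function.update_of_ne hj' (B i) Z).symm, ?_⟩
        simp only [u', diteHom_ne _ _ _ hj', hp']
        simp
      have h2' : ∀ j : Fin n, k ≤ (j : ℕ) → ∃ p : B j = Z' j, u' j = eqToHom p := by
        intro j hj
        by_cases hj' : j = i
        · subst hj'
          refine ⟨(Function.update_self i (B i) Z).symm, ?_⟩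
          simp only [u']
          exact diteHom_self _ _ _
        · have hk1 : k + 1 ≤ (j : ℕ) := by
            rcases Nat.lt_or_ge (j : ℕ) (k + 1) with hlt | hge
            · exact absurd (Fin.ext ((Nat.le_antisymm (Nat.lt_succ_iff.mp hlt) hj) : (j:ℕ) = k)) hj'
            · exact hge
          obtain ⟨p, hp⟩ := h2 j hk1
          refine ⟨p.trans (Function.update_of_ne hj' (B i) Z).symm, ?_⟩
          simp only [u', diteHom_ne _ _ _ hj', hp]
          simp
      obtain ⟨l₀, hl₀⟩ := IH u' h1' h2'
      have hrefl : IsReflexivePair (f i) (g i) :=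
        IsReflexivePair.mk' (sct i) (congrFun hs1 i) (congrFun hs2 i)
      obtain ⟨pc⟩ := hF i Z' (f i) (g i) hrefl
      obtain ⟨hGq⟩ := pc.preserves (eval_isColimit hc i (hfq i))
      have κ'' : Function.update Z' i (B i) = Z' := by
        simp only [Z', Function.update_idem]
      let y : (insertFunctor Z' i ⋙ F).obj (B i) ⟶ X := eqToHom (congrArg F.obj κ'') ≫ l₀
      have hy : (insertFunctor Z' i ⋙ F).map (f i) ≫ y
          = (insertFunctor Z' i ⋙ F).map (g i) ≫ y := by
        let ρ : Function.update B i (A i) ⟶ Function.update Z' i (A i) :=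
          diteHom i (eqToHom ((Function.update_self i (A i) B).trans
              (Function.update_self i (A i) Z').symm))
            (fun j hj => eqToHom (Function.update_of_ne hj (A i) B) ≫ u' j ≫
              eqToHom (Function.update_of_ne hj (A i) Z').symm)
        have hρ : Epi (F.map ρ) := by
          apply epi_aux F hF hfg hc k ρ
          · intro j hj
            have hj' : j ≠ i := by intro hcon; rw [hcon] at hj; exact absurd hj (by simp [hidef])
            obtain ⟨p', hp'⟩ := h1 j (Nat.lt_succ_of_lt hj)
            refine ⟨Function.update_of_ne hj' (A i) B,
              p'.trans ((Function.update_of_ne hj' (B i) Z).symm.trans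
                (Function.update_of_ne hj' (A i) Z').symm), ?_⟩
            simp only [ρ, diteHom_ne _ _ _ hj', u', hp']
            simp
          · intro j hj
            by_cases hj' : j = i
            · subst hj'
              refine ⟨(Function.update_self i (A i) B).trans
                (Function.update_self i (A i) Z').symm, ?_⟩
              simp only [ρ]
              exact diteHom_self _ _ _
            · have hne : (j : ℕ) ≠ k := fun hcon => hj' (Fin.ext hcon)
              have hk1 : k + 1 ≤ (j : ℕ) := by omega
              obtain ⟨p, hp⟩ := h2 j hk1
              refine ⟨(Function.update_of_ne hj' (A i) B).trans
                (p.trans ((Function.update_of_ne hj' (B i) Z).symm.trans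
                  (Function.update_of_ne hj' (A i) Z').symm)), ?_⟩
              simp only [ρ, diteHom_ne _ _ _ hj', u', diteHom_ne _ _ _ hj', hp]
              simp
        let σ : Function.update B i (A i) ⟶ A :=
          diteHom i (eqToHom (Function.update_self i (A i) B))
            (fun j hj => eqToHom (Function.update_of_ne hj (A i) B) ≫ sct j)
        have hclaim1 : ρ ≫ (insertFunctor Z' i).map (f i) ≫ eqToHom κ'' = σ ≫ f ≫ u' := by
          apply pi_hom_ext; intro j
          simp only [pi_comp_apply, pi_eqToHom_apply]
          by_cases hj : j = i
          · subst hj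
            simp only [ρ, σ, u', diteHom_self, insertFunctor_map_self]
            erw [pi_comp_apply, insertFunctor_map_self, pi_eqToHom_apply]
            simp
            erw [eqToHom_trans]
          · simp only [ρ, σ, u', diteHom_ne _ _ _ hj, insertFunctor_map_ne _ _ _ hj]
            erw [pi_comp_apply, insertFunctor_map_ne _ _ _ hj, pi_eqToHom_apply]
            have hsf : sct j ≫ f j = 𝟙 (B j) := congrFun hs1 j
            simp [reassoc_of% hsf]
            erw [eqToHom_trans]
        have hclaim2 : ρ ≫ (insertFunctor Z' i).map (g i) ≫ eqToHom κ'' = σ ≫ g ≫ u' := by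
          apply pi_hom_ext; intro j
          simp only [pi_comp_apply, pi_eqToHom_apply]
          by_cases hj : j = i
          · subst hj
            simp only [ρ, σ, u', diteHom_self, insertFunctor_map_self]
            erw [pi_comp_apply, insertFunctor_map_self, pi_eqToHom_apply]
            simp
            erw [eqToHom_trans]
          · simp only [ρ, σ, u', diteHom_ne _ _ _ hj, insertFunctor_map_ne _ _ _ hj]
            erw [pi_comp_apply, insertFunctor_map_ne _ _ _ hj, pi_eqToHom_apply]
            have hsg : sct j ≫ g j = 𝟙 (B j) := congrFun hs2 j
            simp [reassoc_of% hsg]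
            erw [eqToHom_trans]
        have c1 : F.map ρ ≫ ((insertFunctor Z' i ⋙ F).map (f i) ≫ y)
            = F.map σ ≫ F.map f ≫ h₀ := by
          calc F.map ρ ≫ ((insertFunctor Z' i ⋙ F).map (f i) ≫ y)
              = F.map (ρ ≫ (insertFunctor Z' i).map (f i) ≫ eqToHom κ'') ≫ l₀ := by
                simp only [y, Functor.comp_map, Functor.map_comp, eqToHom_map, Category.assoc]
                erw [Functor.map_comp, eqToHom_map, Category.assoc]
                rfl
            _ = F.map (σ ≫ f ≫ u') ≫ l₀ := by rw [hclaim1]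
            _ = F.map σ ≫ F.map f ≫ h₀ := by
                simp only [Functor.map_comp, Category.assoc, hl₀]
        have c2 : F.map ρ ≫ ((insertFunctor Z' i ⋙ F).map (g i) ≫ y)
            = F.map σ ≫ F.map g ≫ h₀ := by
          calc F.map ρ ≫ ((insertFunctor Z' i ⋙ F).map (g i) ≫ y)
              = F.map (ρ ≫ (insertFunctor Z' i).map (g i) ≫ eqToHom κ'') ≫ l₀ := by
                simp only [y, Functor.comp_map, Functor.map_comp, eqToHom_map, Category.assoc]
                erw [Functor.map_comp, eqToHom_map, Category.assoc]
                rfl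
            _ = F.map (σ ≫ g ≫ u') ≫ l₀ := by rw [hclaim2]
            _ = F.map σ ≫ F.map g ≫ h₀ := by
                simp only [Functor.map_comp, Category.assoc, hl₀]
        have := hρ
        apply (cancel_epi (F.map ρ)).mp
        erw [c1, c2, hcomp]
      let sc : Cocone (parallelPair (f i) (g i) ⋙ (insertFunctor Z' i ⋙ F)) :=
        { pt := X
          ι :=
            { app := fun t => WalkingParallelPair.casesOn t
                ((insertFunctor Z' i ⋙ F).map (f i) ≫ y) y
              naturality := by
                rintro _ _ (_ | _ | _)
                · simp
                · simpa using hy.symm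
                · simp } }
      let l' := hGq.desc sc
      have hl' : (insertFunctor Z' i ⋙ F).map (c.ι.app WalkingParallelPair.one i) ≫ l' = y :=
        hGq.fac sc WalkingParallelPair.one
      have κf : Function.update Z' i (c.pt i) = Z := by
        funext j
        by_cases hj : j = i
        · subst hj
          rw [Function.update_self]
          exact pZ
        · rw [Function.update_of_ne hj]
          simp only [Z']
          rw [Function.update_of_ne hj]
      refine ⟨eqToHom (congrArg F.obj κf).symm ≫ l', ?_⟩
      have hclaim3 : u ≫ eqToHom κf.symm = u' ≫ eqToHom κ''.symm ≫
          (insertFunctor Z' i).map (c.ι.app WalkingParallelPair.one i) := by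
        apply pi_hom_ext; intro j
        simp only [pi_comp_apply, pi_eqToHom_apply]
        by_cases hj : j = i
        · subst hj
          simp only [u', diteHom_self, insertFunctor_map_self, hui]
          erw [pi_comp_apply, insertFunctor_map_self, pi_eqToHom_apply]
          simp
        · simp only [u', diteHom_ne _ _ _ hj, insertFunctor_map_ne _ _ _ hj]
          erw [pi_comp_apply, insertFunctor_map_ne _ _ _ hj, pi_eqToHom_apply]
          simp
      calc F.map u ≫ eqToHom (congrArg F.obj κf).symm ≫ l'
          = F.map (u ≫ eqToHom κf.symm) ≫ l' := by
            simp only [Functor.map_comp, eqToHom_map, Category.assoc]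
            exact (Category.assoc _ _ _).symm
        _ = F.map (u' ≫ eqToHom κ''.symm ≫
            (insertFunctor Z' i).map (c.ι.app WalkingParallelPair.one i)) ≫ l' := by
            rw [hclaim3]
            rfl
        _ = F.map u' ≫ eqToHom (congrArg F.obj κ'').symm ≫
            ((insertFunctor Z' i ⋙ F).map (c.ι.app WalkingParallelPair.one i) ≫ l') := by
            simp only [Functor.map_comp, eqToHom_map, Functor.comp_map, Category.assoc]
            erw [Functor.map_comp, eqToHom_map, Category.assoc]
            rfl
        _ = F.map u' ≫ eqToHom (congrArg F.obj κ'').symm ≫ y := by erw [hl']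
        _ = F.map u' ≫ l₀ := by
            simp [y]
            erw [eqToHom_trans_assoc, eqToHom_refl, Category.id_comp]
        _ = h₀ := hl₀
    · apply IH u
      · intro j hj; exact h1 j (Nat.lt_succ_of_lt hj)
      · intro j hj; exact absurd j.isLt (by omega)

/-- If a functor `F : V₁ × ⋯ × Vₙ ⥤ W` preserves reflexive coequalisers in
each variable separately, then it preserves reflexive coequalisers. -/
theorem stmt15 {W : Type u} [Category.{v} W] (F : (∀ j, V j) ⥤ W)
    (h : ∀ (i : Fin n) (X : ∀ j, V j),
      PreservesReflexiveCoequalizers (insertFunctor X i ⋙ F)) :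
    PreservesReflexiveCoequalizers F := by
  intro A B f g hfg
  refine ⟨⟨fun {c} hc => ?_⟩⟩
  have hepi : Epi (F.map (c.ι.app WalkingParallelPair.one)) := by
    apply epi_aux F h hfg hc n
    · intro j hj
      exact ⟨rfl, rfl, by simp⟩
    · intro j hj
      exact absurd j.isLt (by omega)
  have hdesc : ∀ s : Cocone (parallelPair f g ⋙ F),
      ∃ l : F.obj c.pt ⟶ s.pt,
        F.map (c.ι.app WalkingParallelPair.one) ≫ l = s.ι.app WalkingParallelPair.one := by
    intro s
    have hcomp : F.map f ≫ s.ι.app WalkingParallelPair.one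
        = F.map g ≫ s.ι.app WalkingParallelPair.one :=
      (s.w WalkingParallelPairHom.left).trans (s.w WalkingParallelPairHom.right).symm
    exact desc_aux F h hfg hc (s.ι.app WalkingParallelPair.one) hcomp n
      (c.ι.app WalkingParallelPair.one)
      (fun j hj => ⟨rfl, by simp⟩) (fun j hj => absurd j.isLt (by omega))
  choose dsc hdsc using hdesc
  refine ⟨{ desc := dsc, fac := ?_, uniq := ?_ }⟩
  · intro s t
    cases t with
    | one => exact hdsc s
    | zero =>
      have hz : c.ι.app WalkingParallelPair.zero = f ≫ c.ι.app WalkingParallelPair.one :=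
        (c.w WalkingParallelPairHom.left).symm
      have hz' : (F.mapCocone c).ι.app WalkingParallelPair.zero
          = F.map f ≫ F.map (c.ι.app WalkingParallelPair.one) := by
        simp only [Functor.mapCocone_ι_app, hz, Functor.map_comp]
      rw [hz', Category.assoc, hdsc s]
      exact s.w WalkingParallelPairHom.left
  · intro s m hm
    have h1 : F.map (c.ι.app WalkingParallelPair.one) ≫ m
        = F.map (c.ι.app WalkingParallelPair.one) ≫ dsc s := by
      rw [hdsc s]
      exact hm WalkingParallelPair.one
    exact (cancel_epi _).mp h1

end Paper
end

section
/- (3×3 lemma for reflexive coequalisers) Given a diagram with rows A ⇉ B → C and D ⇉ E → F and vertical pairs A ⇉ D, B ⇉ E, C ⇉ F, and a map c : F → H, such that: the two top rows and the rightmost column are coequalisers, a₁ and b₁ : A → D have a common section, f₁ and g₁ : A → B have a common section, and the evident serial commutativities hold (f₂a₁ = a₂f₁, g₂b₁ = b₂g₁, h₂a₂ = a₃h₁, h₂b₂ = b₃h₁); then c∘h₂ : E → H is a coequaliser of f₂∘a₁ and g₂∘b₁. -/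
open CategoryTheory CategoryTheory.Limits

universe v u

namespace Paper

/-- 3×3 lemma for reflexive coequalisers. -/
theorem stmt16 {V : Type u} [Category.{v} V] {A B C D E F H : V}
    (f₁ g₁ : A ⟶ B) (h₁ : B ⟶ C) (f₂ g₂ : D ⟶ E) (h₂ : E ⟶ F)
    (a₁ b₁ : A ⟶ D) (a₂ b₂ : B ⟶ E) (a₃ b₃ : C ⟶ F) (c : F ⟶ H)
    -- the two top rows are coequalisers:
    (w₁ : f₁ ≫ h₁ = g₁ ≫ h₁) (t₁ : IsColimit (Cofork.ofπ h₁ w₁))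
    (w₂ : f₂ ≫ h₂ = g₂ ≫ h₂) (t₂ : IsColimit (Cofork.ofπ h₂ w₂))
    -- the right-most column is a coequaliser:
    (w₃ : a₃ ≫ c = b₃ ≫ c) (t₃ : IsColimit (Cofork.ofπ c w₃))
    -- `a₁` and `b₁` have a common section:
    (s : D ⟶ A) (hs₁ : s ≫ a₁ = 𝟙 D) (hs₂ : s ≫ b₁ = 𝟙 D)
    -- `f₁` and `g₁` have a common section:
    (r : B ⟶ A) (hr₁ : r ≫ f₁ = 𝟙 B) (hr₂ : r ≫ g₁ = 𝟙 B)
    -- serial commutativities: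
    (c₁ : a₁ ≫ f₂ = f₁ ≫ a₂) (c₂ : b₁ ≫ g₂ = g₁ ≫ b₂)
    (c₃ : a₂ ≫ h₂ = h₁ ≫ a₃) (c₄ : b₂ ≫ h₂ = h₁ ≫ b₃) :
    Nonempty (IsColimit (Cofork.ofπ (h₂ ≫ c)
      (show (a₁ ≫ f₂) ≫ h₂ ≫ c = (b₁ ≫ g₂) ≫ h₂ ≫ c by
        rw [Category.assoc, Category.assoc, reassoc_of% c₁, reassoc_of% c₂,
          reassoc_of% c₃, reassoc_of% c₄, ← reassoc_of% w₁, w₃]))) := by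
  refine ⟨Cofork.IsColimit.mk' _ (fun sk => ?_)⟩
  have cond : a₁ ≫ f₂ ≫ sk.π = b₁ ≫ g₂ ≫ sk.π := by
    simpa using sk.condition
  -- Step 1: f₂ ≫ π = g₂ ≫ π, using the common section s
  have hfg : f₂ ≫ sk.π = g₂ ≫ sk.π := by
    calc f₂ ≫ sk.π = s ≫ a₁ ≫ f₂ ≫ sk.π := by rw [reassoc_of% hs₁]
    _ = s ≫ b₁ ≫ g₂ ≫ sk.π := by rw [cond]
    _ = g₂ ≫ sk.π := by rw [reassoc_of% hs₂]
  -- factor π through h₂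
  obtain ⟨m, hm⟩ := Cofork.IsColimit.desc' t₂ sk.π hfg
  have hm' : h₂ ≫ m = sk.π := hm
  -- Step 2: a₂ ≫ π = b₂ ≫ π, using the common section r
  have hab : a₂ ≫ sk.π = b₂ ≫ sk.π := by
    calc a₂ ≫ sk.π = r ≫ f₁ ≫ a₂ ≫ sk.π := by rw [reassoc_of% hr₁]
    _ = r ≫ a₁ ≫ f₂ ≫ sk.π := by rw [reassoc_of% c₁]
    _ = r ≫ b₁ ≫ g₂ ≫ sk.π := by rw [cond]
    _ = r ≫ g₁ ≫ b₂ ≫ sk.π := by rw [reassoc_of% c₂]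
    _ = b₂ ≫ sk.π := by rw [reassoc_of% hr₂]
  -- Step 3: a₃ ≫ m = b₃ ≫ m, by cancelling the epi h₁
  have hab3 : a₃ ≫ m = b₃ ≫ m := by
    apply Cofork.IsColimit.hom_ext t₁
    simp only [Cofork.π_ofπ]
    rw [← reassoc_of% c₃, ← reassoc_of% c₄, hm', hab]
  -- factor m through c
  obtain ⟨l, hl⟩ := Cofork.IsColimit.desc' t₃ m hab3
  have hl' : c ≫ l = m := hl
  refine ⟨l, ?_, ?_⟩
  · simp only [Cofork.π_ofπ]
    rw [Category.assoc, hl', hm']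
  · intro n hn
    simp only [Cofork.π_ofπ] at hn
    apply Cofork.IsColimit.hom_ext t₃
    apply Cofork.IsColimit.hom_ext t₂
    simp only [Cofork.π_ofπ]
    rw [← Category.assoc, ← Category.assoc, hn, Category.assoc, hl', hm']

end Paper
end
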